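/- arXiv:1705.09677 — 5 statements merged into one kernel-verified Lean document; each statement's English description precedes it below -/
import Mathlib

section
/- For positive definite m×m matrices P and Q, the elementary symmetric polynomial E_ℓ is geodesically log-convex at the geodesic midpoint: E_ℓ(P # Q) ≤ √(E_ℓ(P) · E_ℓ(Q)), where P # Q = P^{1/2}(P^{-1/2} Q P^{-1/2})^{1/2} P^{1/2} is the matrix geometric mean. -/
open Matrix Finset

open scoped ComplexOrder in
/-- The positive semidefinite square root of a positive semidefinite matrix
(as `Matrix.PosSemidef.sqrt` was defined in Mathlib before its removal). -/
noncomputable def Matrix.PosSemidef.sqrt {n 𝕜 : Type*} [Fintype n] [RCLike 𝕜] [DecidableEq n]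
    {A : Matrix n n 𝕜} (hA : A.PosSemidef) : Matrix n n 𝕜 :=
  (hA.1.eigenvectorUnitary : Matrix n n 𝕜) * diagonal (fun i => ((√(hA.1.eigenvalues i) : ℝ) : 𝕜)) *
    (star hA.1.eigenvectorUnitary : Matrix n n 𝕜)

open scoped ComplexOrder in
lemma Matrix.PosSemidef.posSemidef_sqrt {n 𝕜 : Type*} [Fintype n] [RCLike 𝕜] [DecidableEq n]
    {A : Matrix n n 𝕜} (hA : A.PosSemidef) : hA.sqrt.PosSemidef := by
  unfold Matrix.PosSemidef.sqrt
  have := (Matrix.posSemidef_diagonal_iff (R := 𝕜) (d := fun i => ((√(hA.1.eigenvalues i) : ℝ) : 𝕜))).2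
    (fun i => by simp [Real.sqrt_nonneg])
  simpa [Matrix.star_eq_conjTranspose] using
    this.mul_mul_conjTranspose_same (hA.1.eigenvectorUnitary : Matrix n n 𝕜)

open Classical in
/-- `Esymm ℓ M` : the ℓ-th elementary symmetric polynomial of the eigenvalues of the
(symmetric) matrix `M`. -/
noncomputable def Esymm {m : ℕ} (ℓ : ℕ) (M : Matrix (Fin m) (Fin m) ℝ) : ℝ :=
  if h : M.IsHermitian then
    ∑ S ∈ Finset.powersetCard ℓ (Finset.univ : Finset (Fin m)), ∏ i ∈ S, h.eigenvalues i
  else 0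

/-- The matrix geometric mean `P # Q = P^{1/2} (P^{-1/2} Q P^{-1/2})^{1/2} P^{1/2}`. -/
noncomputable def geomMean {m : ℕ} (P Q : Matrix (Fin m) (Fin m) ℝ)
    (hP : P.PosDef) (hQ : Q.PosDef) : Matrix (Fin m) (Fin m) ℝ :=
  let S := hP.posSemidef.sqrt
  have hmid : (S⁻¹ * Q * S⁻¹).PosSemidef := by
    have h1 : (S⁻¹).IsHermitian := hP.posSemidef.posSemidef_sqrt.1.inv
    have h2 := hQ.posSemidef.conjTranspose_mul_mul_same (S⁻¹)
    rwa [h1.eq] at h2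
  S * hmid.sqrt * S

open scoped ComplexOrder in
lemma Matrix.PosSemidef.sqrt_mul_self' {n 𝕜 : Type*} [Fintype n] [RCLike 𝕜] [DecidableEq n]
    {A : Matrix n n 𝕜} (hA : A.PosSemidef) : hA.sqrt * hA.sqrt = A := by
  unfold Matrix.PosSemidef.sqrt
  set U := (hA.1.eigenvectorUnitary : Matrix n n 𝕜)
  have hUU : star U * U = 1 := Matrix.mem_unitaryGroup_iff'.mp hA.1.eigenvectorUnitary.2
  have hD : diagonal (fun i => ((√(hA.1.eigenvalues i) : ℝ) : 𝕜)) *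
      diagonal (fun i => ((√(hA.1.eigenvalues i) : ℝ) : 𝕜))
      = diagonal (RCLike.ofReal ∘ hA.1.eigenvalues) := by
    rw [diagonal_mul_diagonal]
    congr 1
    funext i
    simp only [Function.comp]
    rw [← RCLike.ofReal_mul, Real.mul_self_sqrt (hA.eigenvalues_nonneg i)]
  calc U * diagonal (fun i => ((√(hA.1.eigenvalues i) : ℝ) : 𝕜)) * star U *
        (U * diagonal (fun i => ((√(hA.1.eigenvalues i) : ℝ) : 𝕜)) * star U)
      = U * (diagonal (fun i => ((√(hA.1.eigenvalues i) : ℝ) : 𝕜)) *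
        diagonal (fun i => ((√(hA.1.eigenvalues i) : ℝ) : 𝕜))) * star U := by
        simp only [mul_assoc]
        rw [← mul_assoc (star U) U, hUU, one_mul]
    _ = A := by rw [hD]; exact hA.1.spectral_theorem.symm

open Matrix Finset Equiv

namespace EsymmAux

variable {m ℓ : ℕ}

/-- Index type: subsets of `Fin m` of cardinality `ℓ`. -/
abbrev Idx (m ℓ : ℕ) := {S : Finset (Fin m) // S.card = ℓ}

/-- The increasing enumeration of a subset. -/
def emb (S : Idx m ℓ) : Fin ℓ → Fin m := S.1.orderEmbOfFin S.2

lemma emb_injective (S : Idx m ℓ) : Function.Injective (emb S) :=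
  (S.1.orderEmbOfFin S.2).injective

lemma emb_mem (S : Idx m ℓ) (i : Fin ℓ) : emb S i ∈ S.1 :=
  Finset.orderEmbOfFin_mem _ _ _

lemma image_emb (S : Idx m ℓ) : Finset.image (emb S) Finset.univ = S.1 := by
  ext a
  simp only [Finset.mem_image, Finset.mem_univ, true_and]
  constructor
  · rintro ⟨i, rfl⟩; exact emb_mem S i
  · intro ha
    have : a ∈ Set.range (emb S) := by
      rw [show Set.range (emb S) = ↑S.1 from Finset.range_orderEmbOfFin _ _]
      exact ha
    exact this

private def gsum (A : Matrix (Fin ℓ) (Fin m) ℝ) (B : Matrix (Fin m) (Fin ℓ) ℝ)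
    (p : Fin ℓ → Fin m) : ℝ :=
  ∑ σ : Perm (Fin ℓ), ((Perm.sign σ : ℤ) : ℝ) * ∏ i, A (σ i) (p i) * B (p i) i

private lemma det_mul_eq_sum (A : Matrix (Fin ℓ) (Fin m) ℝ) (B : Matrix (Fin m) (Fin ℓ) ℝ) :
    det (A * B) = ∑ p : Fin ℓ → Fin m, gsum A B p := by
  simp only [det_apply', mul_apply, prod_univ_sum, mul_sum, Fintype.piFinset_univ, gsum]
  rw [Finset.sum_comm]

private lemma gsum_eq_zero {A : Matrix (Fin ℓ) (Fin m) ℝ} {B : Matrix (Fin m) (Fin ℓ) ℝ}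
    {p : Fin ℓ → Fin m} (H : ¬Function.Injective p) : gsum A B p = 0 := by
  obtain ⟨i, j, hpij, hij⟩ : ∃ i j, p i = p j ∧ i ≠ j := by
    rw [Function.Injective] at H; push_neg at H; exact H
  exact
    Finset.sum_involution (fun σ _ => σ * Equiv.swap i j)
      (fun σ _ => by
        have : (∏ x, A (σ x) (p x)) = ∏ x, A ((σ * Equiv.swap i j) x) (p x) :=
          Fintype.prod_equiv (Equiv.swap i j) _ _ (by simp [Equiv.apply_swap_eq_self hpij])
        simp [this, Perm.sign_swap hij, -Perm.sign_swap', prod_mul_distrib])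
      (fun σ _ _ => (not_congr mul_swap_eq_iff).mpr hij) (fun _ _ => mem_univ _) fun σ _ =>
      mul_swap_involutive i j σ

private lemma det_mul_eq_sum_inj (A : Matrix (Fin ℓ) (Fin m) ℝ) (B : Matrix (Fin m) (Fin ℓ) ℝ) :
    det (A * B) = ∑ p ∈ Finset.univ.filter (fun p : Fin ℓ → Fin m => Function.Injective p),
      gsum A B p := by
  rw [det_mul_eq_sum]
  refine (Finset.sum_subset (filter_subset _ _) fun p _ hp => gsum_eq_zero ?_).symm
  simpa using hp

private lemma det_mul_eq_sum_perm (A : Matrix (Fin ℓ) (Fin ℓ) ℝ) (B : Matrix (Fin ℓ) (Fin ℓ) ℝ) :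
    det (A * B) = ∑ τ : Perm (Fin ℓ), gsum A B τ := by
  rw [det_mul_eq_sum_inj]
  refine Finset.sum_bij (fun p h => Equiv.ofBijective p
      ((Finite.injective_iff_bijective).mp (mem_filter.mp h).2))
    (fun _ _ => mem_univ _) (fun _ _ _ _ h => by injection h)
    (fun τ _ => ⟨τ, mem_filter.mpr ⟨mem_univ _, τ.injective⟩, coe_fn_injective rfl⟩)
    (fun _ _ => rfl)

private lemma det_submatrix_mul (A : Matrix (Fin ℓ) (Fin m) ℝ) (B : Matrix (Fin m) (Fin ℓ) ℝ)
    (f : Fin ℓ → Fin m) :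
    det ((A.submatrix id f) * (B.submatrix f id)) = ∑ τ : Perm (Fin ℓ), gsum A B (f ∘ τ) := by
  rw [det_mul_eq_sum_perm]
  rfl

/-- **Cauchy–Binet formula**. -/
theorem cauchyBinet (A : Matrix (Fin ℓ) (Fin m) ℝ) (B : Matrix (Fin m) (Fin ℓ) ℝ) :
    det (A * B) = ∑ S : Idx m ℓ, det (A.submatrix id (emb S)) * det (B.submatrix (emb S) id) := by
  have key : ∀ S : Idx m ℓ, det (A.submatrix id (emb S)) * det (B.submatrix (emb S) id)
      = ∑ τ : Perm (Fin ℓ), gsum A B (emb S ∘ τ) := fun S => by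
    rw [← det_mul, det_submatrix_mul]
  simp_rw [key]
  rw [det_mul_eq_sum_inj, ← Fintype.sum_prod_type']
  refine (Finset.sum_bij (fun (x : Idx m ℓ × Perm (Fin ℓ)) _ => emb x.1 ∘ ⇑x.2)
    ?_ ?_ ?_ ?_).symm
  · intro x _
    exact mem_filter.mpr ⟨mem_univ _, (emb_injective x.1).comp x.2.injective⟩
  · intro x₁ hx₁ x₂ hx₂ h
    obtain ⟨S₁, τ₁⟩ := x₁
    obtain ⟨S₂, τ₂⟩ := x₂
    simp only at h
    simp only [Prod.mk.injEq]
    have hS : S₁ = S₂ := by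
      apply Subtype.ext
      have h1 : Finset.image (emb S₁ ∘ ⇑τ₁) Finset.univ = S₁.1 := by
        rw [← Finset.image_image, Finset.image_univ_equiv, image_emb]
      have h2 : Finset.image (emb S₂ ∘ ⇑τ₂) Finset.univ = S₂.1 := by
        rw [← Finset.image_image, Finset.image_univ_equiv, image_emb]
      rw [← h1, ← h2, h]
    subst hS
    refine ⟨rfl, ?_⟩
    apply Equiv.ext
    intro i
    exact emb_injective S₁ (congrFun h i)
  · intro p hp
    have hinj : Function.Injective p := (mem_filter.mp hp).2
    have hcard : (Finset.image p Finset.univ).card = ℓ := by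
      rw [Finset.card_image_of_injective _ hinj, Finset.card_univ, Fintype.card_fin]
    set S : Idx m ℓ := ⟨Finset.image p Finset.univ, hcard⟩ with hSdef
    have hmem : ∀ i, p i ∈ S.1 := fun i => Finset.mem_image_of_mem _ (mem_univ i)
    set q : Fin ℓ → Fin ℓ := fun i => (S.1.orderIsoOfFin S.2).symm ⟨p i, hmem i⟩ with hq
    have hqinj : Function.Injective q := by
      intro a b hab
      apply hinj
      have := (S.1.orderIsoOfFin S.2).symm.injective hab
      exact congrArg Subtype.val this
    refine ⟨⟨S, Equiv.ofBijective q ((Finite.injective_iff_bijective).mp hqinj)⟩, mem_univ _, ?_⟩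
    simp only
    funext i
    show emb S (q i) = p i
    rw [emb, ← Finset.coe_orderIsoOfFin_apply, hq]
    simp
  · intro x _
    rfl

end EsymmAux

namespace EsymmAux

variable {m : ℕ}

/-- The `ℓ`-th compound matrix. -/
noncomputable def cmpd (ℓ : ℕ) (M : Matrix (Fin m) (Fin m) ℝ) : Matrix (Idx m ℓ) (Idx m ℓ) ℝ :=
  fun S T => det (M.submatrix (emb S) (emb T))

lemma cmpd_mul (ℓ : ℕ) (M N : Matrix (Fin m) (Fin m) ℝ) :
    cmpd ℓ (M * N) = cmpd ℓ M * cmpd ℓ N := by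
  funext S T
  show det ((M * N).submatrix (emb S) (emb T)) = _
  have : (M * N).submatrix (emb S) (emb T)
      = (M.submatrix (emb S) id) * (N.submatrix id (emb T)) := by
    exact Matrix.submatrix_mul M N (emb S) id (emb T) Function.bijective_id
  rw [this, cauchyBinet]
  rw [Matrix.mul_apply]
  apply Finset.sum_congr rfl
  intro U _
  simp [cmpd, Matrix.submatrix_submatrix, Function.comp_def]

lemma cmpd_transpose (ℓ : ℕ) (M : Matrix (Fin m) (Fin m) ℝ) :
    cmpd ℓ Mᵀ = (cmpd ℓ M)ᵀ := by
  funext S T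
  show det (Mᵀ.submatrix (emb S) (emb T)) = det (M.submatrix (emb T) (emb S))
  rw [← Matrix.transpose_submatrix, Matrix.det_transpose]

lemma cmpd_one (ℓ : ℕ) : cmpd ℓ (1 : Matrix (Fin m) (Fin m) ℝ) = 1 := by
  funext S T
  by_cases hST : S = T
  · subst hST
    show det ((1 : Matrix (Fin m) (Fin m) ℝ).submatrix (emb S) (emb S)) = _
    have : (1 : Matrix (Fin m) (Fin m) ℝ).submatrix (emb S) (emb S) = 1 := by
      funext i j
      simp [Matrix.one_apply, (emb_injective S).eq_iff]
    rw [this, Matrix.det_one, Matrix.one_apply_eq]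
  · show det ((1 : Matrix (Fin m) (Fin m) ℝ).submatrix (emb S) (emb T)) = _
    obtain ⟨t, htT, htS⟩ : ∃ t ∈ T.1, t ∉ S.1 := by
      by_contra hc
      push_neg at hc
      exact hST (Subtype.ext (Finset.eq_of_subset_of_card_le hc (by rw [S.2, T.2])).symm)
    obtain ⟨j, rfl⟩ : ∃ j, emb T j = t := by
      have : t ∈ Set.range (emb T) := by
        rw [show Set.range (emb T) = ↑T.1 from Finset.range_orderEmbOfFin _ _]; exact htT
      exact this
    rw [Matrix.one_apply_ne hST]
    apply Matrix.det_eq_zero_of_column_eq_zero j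
    intro i
    simp only [Matrix.submatrix_apply]
    exact Matrix.one_apply_ne fun hh => htS (hh ▸ emb_mem S i)

lemma trace_cmpd_diagonal (ℓ : ℕ) (d : Fin m → ℝ) :
    Matrix.trace (cmpd ℓ (Matrix.diagonal d))
      = ∑ s ∈ Finset.powersetCard ℓ (Finset.univ : Finset (Fin m)), ∏ i ∈ s, d i := by
  rw [Matrix.trace,
    Finset.sum_subtype (Finset.powersetCard ℓ (Finset.univ : Finset (Fin m)))
      (fun s => Finset.mem_powersetCard_univ) (fun s => ∏ i ∈ s, d i)]
  apply Finset.sum_congr rfl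
  intro S _
  show det ((Matrix.diagonal d).submatrix (emb S) (emb S)) = ∏ i ∈ S.1, d i
  have : (Matrix.diagonal d).submatrix (emb S) (emb S) = Matrix.diagonal (d ∘ emb S) := by
    funext i j
    simp [Matrix.diagonal_apply, (emb_injective S).eq_iff]
  rw [this, Matrix.det_diagonal, ← image_emb S, Finset.prod_image
    (fun a _ b _ h => emb_injective S h)]
  rfl

lemma trace_cmpd_hermitian (ℓ : ℕ) {M : Matrix (Fin m) (Fin m) ℝ} (hM : M.IsHermitian) :
    Matrix.trace (cmpd ℓ M)
      = ∑ s ∈ Finset.powersetCard ℓ (Finset.univ : Finset (Fin m)),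
          ∏ i ∈ s, hM.eigenvalues i := by
  set U : Matrix (Fin m) (Fin m) ℝ := (hM.eigenvectorUnitary : Matrix (Fin m) (Fin m) ℝ) with hU
  have hUU : star U * U = 1 := Matrix.mem_unitaryGroup_iff'.mp hM.eigenvectorUnitary.2
  have hspec : M = U * Matrix.diagonal (RCLike.ofReal ∘ hM.eigenvalues) * star U :=
    hM.spectral_theorem
  have hdiag : Matrix.diagonal (RCLike.ofReal ∘ hM.eigenvalues)
      = Matrix.diagonal hM.eigenvalues := by
    rw [RCLike.ofReal_real_eq_id]
    rfl
  calc Matrix.trace (cmpd ℓ M)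
      = Matrix.trace (cmpd ℓ U * cmpd ℓ (Matrix.diagonal hM.eigenvalues) * cmpd ℓ (star U)) := by
        conv_lhs => rw [hspec]
        rw [hdiag, cmpd_mul, cmpd_mul]
    _ = Matrix.trace (cmpd ℓ (star U) * cmpd ℓ U * cmpd ℓ (Matrix.diagonal hM.eigenvalues)) := by
        rw [Matrix.trace_mul_cycle]
    _ = Matrix.trace (cmpd ℓ (Matrix.diagonal hM.eigenvalues)) := by
        rw [← cmpd_mul, hUU, cmpd_one, one_mul]
    _ = _ := trace_cmpd_diagonal ℓ _


/-- trace of a product, expanded. -/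
lemma trace_mul_expand {ι : Type*} [Fintype ι] (C D : Matrix ι ι ℝ) :
    Matrix.trace (C * D) = ∑ p : ι × ι, C p.1 p.2 * D p.2 p.1 := by
  rw [Matrix.trace, Fintype.sum_prod_type]
  apply Finset.sum_congr rfl
  intro S _
  rw [Matrix.diag]
  rw [Matrix.mul_apply]

end EsymmAux

open EsymmAux

lemma Esymm_eq_trace {m ℓ : ℕ} {M : Matrix (Fin m) (Fin m) ℝ} (hM : M.IsHermitian) :
    Esymm ℓ M = Matrix.trace (cmpd ℓ M) := by
  rw [Esymm, dif_pos hM, trace_cmpd_hermitian ℓ hM]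

theorem esymm_geomMean_le {m : ℕ} (P Q : Matrix (Fin m) (Fin m) ℝ)
    (hP : P.PosDef) (hQ : Q.PosDef) (ℓ : ℕ) (h1 : 1 ≤ ℓ) (h2 : ℓ ≤ m) :
    Esymm ℓ (geomMean P Q hP hQ) ≤ Real.sqrt (Esymm ℓ P * Esymm ℓ Q) := by
  classical
  set A := hP.posSemidef.sqrt with hAdef
  have hA : A.PosSemidef := hP.posSemidef.posSemidef_sqrt
  have hAH : A.IsHermitian := hA.1
  have hAA : A * A = P := hP.posSemidef.sqrt_mul_self'
  have hmid : (A⁻¹ * Q * A⁻¹).PosSemidef := by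
    have hh1 : (A⁻¹).IsHermitian := hP.posSemidef.posSemidef_sqrt.1.inv
    have hh2 := hQ.posSemidef.conjTranspose_mul_mul_same (A⁻¹)
    rwa [hh1.eq] at hh2
  set B := hmid.sqrt with hBdef
  have hB : B.PosSemidef := hmid.posSemidef_sqrt
  have hBH : B.IsHermitian := hB.1
  have hBB : B * B = A⁻¹ * Q * A⁻¹ := hmid.sqrt_mul_self'
  have hgeom : geomMean P Q hP hQ = A * B * A := rfl
  -- invertibility of A
  have hdetA : A.det ≠ 0 := by
    intro h
    have := hP.det_pos
    rw [← hAA, Matrix.det_mul, h, mul_zero] at this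
    exact lt_irrefl 0 this
  have hInv : A⁻¹ * A = 1 := Matrix.nonsing_inv_mul A (isUnit_iff_ne_zero.mpr hdetA)
  have hInv' : A * A⁻¹ = 1 := Matrix.mul_nonsing_inv A (isUnit_iff_ne_zero.mpr hdetA)
  have hABBA : A * B * (B * A) = Q := by
    have e1 : A * B * (B * A) = A * (B * B) * A := by
      rw [mul_assoc A B (B * A), ← mul_assoc B B A, ← mul_assoc]
    rw [e1, hBB]
    calc A * (A⁻¹ * Q * A⁻¹) * A = A * A⁻¹ * Q * (A⁻¹ * A) := by
          simp only [mul_assoc]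
      _ = Q := by rw [hInv, hInv', one_mul, mul_one]
  have hXH : (A * B * A).IsHermitian := by
    show (A * B * A)ᴴ = A * B * A
    rw [Matrix.conjTranspose_mul, Matrix.conjTranspose_mul, hAH.eq, hBH.eq, ← mul_assoc]
  -- transposes
  have hAT : Aᵀ = A := (Matrix.conjTranspose_eq_transpose_of_trivial A).symm.trans hAH.eq
  have hBT : Bᵀ = B := (Matrix.conjTranspose_eq_transpose_of_trivial B).symm.trans hBH.eq
  set A' := cmpd ℓ A with hA'def
  set B' := cmpd ℓ B with hB'def
  have hA'T : A'ᵀ = A' := by rw [hA'def, ← cmpd_transpose, hAT]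
  have hB'T : B'ᵀ = B' := by rw [hB'def, ← cmpd_transpose, hBT]
  have hA'sym : ∀ S T : Idx m ℓ, A' T S = A' S T := fun S T => congrFun (congrFun hA'T S) T
  -- traces
  have hEX : Esymm ℓ (A * B * A) = Matrix.trace (A' * B' * A') := by
    rw [Esymm_eq_trace hXH, cmpd_mul, cmpd_mul]
  have hEP : Esymm ℓ P = Matrix.trace (A' * A') := by
    rw [Esymm_eq_trace hP.1, ← hAA, cmpd_mul]
  have hEQ : Esymm ℓ Q = Matrix.trace ((A' * B') * (B' * A')) := by
    rw [Esymm_eq_trace hQ.1, ← hABBA, cmpd_mul, cmpd_mul, cmpd_mul]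
  -- expand traces as sums over pairs
  have hX' : Matrix.trace (A' * B' * A')
      = ∑ p : Idx m ℓ × Idx m ℓ, (B' * A') p.1 p.2 * A' p.1 p.2 := by
    rw [mul_assoc, Matrix.trace_mul_comm, trace_mul_expand]
    apply Finset.sum_congr rfl
    intro p _
    rw [hA'sym p.2 p.1]
  have hP' : Matrix.trace (A' * A') = ∑ p : Idx m ℓ × Idx m ℓ, A' p.1 p.2 ^ 2 := by
    rw [trace_mul_expand]
    apply Finset.sum_congr rfl
    intro p _
    rw [hA'sym p.2 p.1, sq]
  have hBA'T : (B' * A')ᵀ = A' * B' := by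
    rw [Matrix.transpose_mul, hA'T, hB'T]
  have hQ' : Matrix.trace ((A' * B') * (B' * A'))
      = ∑ p : Idx m ℓ × Idx m ℓ, (B' * A') p.1 p.2 ^ 2 := by
    rw [trace_mul_expand]
    calc ∑ p : Idx m ℓ × Idx m ℓ, (A' * B') p.1 p.2 * (B' * A') p.2 p.1
        = ∑ p : Idx m ℓ × Idx m ℓ, (B' * A') p.2 p.1 ^ 2 := by
          apply Finset.sum_congr rfl
          intro p _
          have hh : (A' * B') p.1 p.2 = (B' * A') p.2 p.1 := by
            rw [← hBA'T]; rfl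
          rw [hh, sq]
      _ = ∑ p : Idx m ℓ × Idx m ℓ, (B' * A') p.1 p.2 ^ 2 :=
          Fintype.sum_equiv (Equiv.prodComm _ _) _ _ (fun p => rfl)
  -- Cauchy–Schwarz
  have CS := Finset.sum_mul_sq_le_sq_mul_sq Finset.univ
    (fun p : Idx m ℓ × Idx m ℓ => (B' * A') p.1 p.2) (fun p => A' p.1 p.2)
  rw [hgeom, hEX, hX', hEP, hEQ]
  refine le_trans (le_abs_self _) ?_
  rw [← Real.sqrt_sq_eq_abs]
  apply Real.sqrt_le_sqrt
  calc (∑ p : Idx m ℓ × Idx m ℓ, (B' * A') p.1 p.2 * A' p.1 p.2) ^ 2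
      ≤ (∑ p : Idx m ℓ × Idx m ℓ, (B' * A') p.1 p.2 ^ 2)
        * ∑ p : Idx m ℓ × Idx m ℓ, A' p.1 p.2 ^ 2 := CS
    _ = Matrix.trace (A' * A') * Matrix.trace ((A' * B') * (B' * A')) := by
        rw [hP', hQ', mul_comm]
end

section
/- For positive definite matrices Z, Y and a full-column-rank matrix A, one has log E_ℓ((Aᵀ((Z+Y)/2)A)⁻¹) ≤ ½ log E_ℓ((AᵀZA)⁻¹) + ½ log E_ℓ((AᵀYA)⁻¹); that is, the map Z ↦ log E_ℓ((AᵀZA)⁻¹) is midpoint convex on positive definite matrices. -/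
open Matrix Finset

section AuxProofs
open Polynomial
set_option linter.unusedSectionVars false

namespace Aux
variable {m : ℕ}
variable {m : ℕ}

variable {ι : Type*} [Fintype ι] [DecidableEq ι]

/-- det of a conjugation by a unitary. -/
lemma det_conj_unitary {U X : Matrix ι ι ℝ} (hU : U * star U = 1) :
    (star U * X * U).det = X.det := by
  have h2 : det (U * star U) = 1 := by rw [hU, det_one]
  rw [det_mul] at h2
  rw [det_mul, det_mul]
  calc (star U).det * X.det * U.det = X.det * (U.det * (star U).det) := by ring
    _ = X.det := by rw [h2, mul_one]

lemma det_smul_one_add_smul {N : Matrix ι ι ℝ} (hN : N.IsHermitian) (t s : ℝ) :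
    (t • (1 : Matrix ι ι ℝ) + s • N).det = ∏ i, (t + s * hN.eigenvalues i) := by
  set U : Matrix ι ι ℝ := (hN.eigenvectorUnitary : Matrix ι ι ℝ) with hUdef
  have hU : U * star U = 1 := (Matrix.mem_unitaryGroup_iff).mp hN.eigenvectorUnitary.2
  have hU' : star U * U = 1 := Unitary.coe_star_mul_self hN.eigenvectorUnitary
  have key : star U * (t • (1 : Matrix ι ι ℝ) + s • N) * U
      = diagonal fun i => t + s * hN.eigenvalues i := by
    have hD : star U * N * U = diagonal (RCLike.ofReal ∘ hN.eigenvalues) := by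
      rw [← hN.conjStarAlgAut_star_eigenvectorUnitary, Unitary.conjStarAlgAut_star_apply]
    rw [RCLike.ofReal_real_eq_id] at hD
    calc star U * (t • (1 : Matrix ι ι ℝ) + s • N) * U
        = t • (star U * U) + s • (star U * N * U) := by
          noncomm_ring
      _ = diagonal fun i => t + s * hN.eigenvalues i := by
          rw [hU', hD]
          rw [Matrix.smul_one_eq_diagonal]
          ext i j
          by_cases h : i = j <;> simp [Matrix.diagonal, h, Function.comp]
  rw [← det_conj_unitary hU (X := t • (1 : Matrix ι ι ℝ) + s • N), key, det_diagonal]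

/-- principal minor of `M` on the index set `T`. -/
noncomputable def minor (M : Matrix (Fin m) (Fin m) ℝ) (T : Finset (Fin m)) : ℝ :=
  (M.submatrix (fun i : {x // x ∈ T} => (i : Fin m)) (fun i : {x // x ∈ T} => (i : Fin m))).det

lemma det_piecewise_one (M : Matrix (Fin m) (Fin m) ℝ) (s : Finset (Fin m)) :
    det (s.piecewise (1 : Matrix (Fin m) (Fin m) ℝ) M) = minor M sᶜ := by
  classical
  set e : {x // x ∈ s} ⊕ {x // ¬ x ∈ s} ≃ Fin m := Equiv.sumCompl (· ∈ s) with he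
  set F : Matrix ({x // x ∈ s} ⊕ {x // ¬ x ∈ s}) ({x // x ∈ s} ⊕ {x // ¬ x ∈ s}) ℝ :=
    fromBlocks 1 0
      (M.submatrix (fun b : {x // ¬ x ∈ s} => (b : Fin m)) (fun a : {x // x ∈ s} => (a : Fin m)))
      (M.submatrix (fun b : {x // ¬ x ∈ s} => (b : Fin m)) (fun b : {x // ¬ x ∈ s} => (b : Fin m)))
      with hF
  have hmat : s.piecewise (1 : Matrix (Fin m) (Fin m) ℝ) M = F.submatrix e.symm e.symm := by
    ext i j
    obtain ⟨p, rfl⟩ := e.surjective i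
    obtain ⟨q, rfl⟩ := e.surjective j
    rcases p with a | a <;> rcases q with b | b <;>
      simp only [Matrix.submatrix_apply, Equiv.symm_apply_apply, hF, he] <;>
      simp only [Equiv.sumCompl_apply_inl, Equiv.sumCompl_apply_inr]
    · simp only [Finset.piecewise, a.2, ↓reduceIte]
      simp only [fromBlocks_apply₁₁]
      by_cases hab : a = b
      · subst hab; simp
      · rw [Matrix.one_apply_ne hab, Matrix.one_apply_ne (fun h => hab (Subtype.ext h))]
    · simp only [Finset.piecewise, a.2, ↓reduceIte]
      simp only [fromBlocks_apply₁₂, Matrix.zero_apply]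
      exact Matrix.one_apply_ne (fun h => b.2 (h ▸ a.2))
    · simp only [Finset.piecewise, a.2, ↓reduceIte]; rfl
    · simp only [Finset.piecewise, a.2, ↓reduceIte]; rfl
  rw [hmat, Matrix.det_submatrix_equiv_self, hF, Matrix.det_fromBlocks_zero₁₂, det_one, one_mul]
  -- now relate index types {x // ¬ x ∈ s} and {x // x ∈ sᶜ}
  set e2 : {x : Fin m // x ∈ sᶜ} ≃ {x : Fin m // ¬ x ∈ s} :=
    Equiv.subtypeEquivRight (fun x => Finset.mem_compl)
  rw [minor, ← Matrix.det_submatrix_equiv_self e2]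
  congr 1

lemma det_smul_one_add (M : Matrix (Fin m) (Fin m) ℝ) (t : ℝ) :
    det (t • (1 : Matrix (Fin m) (Fin m) ℝ) + M)
      = ∑ s ∈ (univ : Finset (Fin m)).powerset, t ^ s.card * minor M sᶜ := by
  classical
  have h0 : det (t • (1 : Matrix (Fin m) (Fin m) ℝ) + M)
      = ∑ s : Finset (Fin m),
          (detRowAlternating : (Fin m → ℝ) [⋀^Fin m]→ₗ[ℝ] ℝ)
            (s.piecewise (t • (1 : Matrix (Fin m) (Fin m) ℝ)) M) :=
    (detRowAlternating : (Fin m → ℝ) [⋀^Fin m]→ₗ[ℝ] ℝ).toMultilinearMap.map_add_univ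
      (t • (1 : Matrix (Fin m) (Fin m) ℝ)) M
  rw [h0, Finset.powerset_univ]
  refine Finset.sum_congr rfl (fun s _ => ?_)
  have hg : s.piecewise (t • (1 : Matrix (Fin m) (Fin m) ℝ)) M
      = s.piecewise (fun i => t • (s.piecewise (1 : Matrix (Fin m) (Fin m) ℝ) M) i)
          (s.piecewise (1 : Matrix (Fin m) (Fin m) ℝ) M) := by
    funext i
    by_cases h : i ∈ s
    · simp [Finset.piecewise, h]; rfl
    · simp [Finset.piecewise, h]
  rw [hg]
  show ((detRowAlternating : (Fin m → ℝ) [⋀^Fin m]→ₗ[ℝ] ℝ).toMultilinearMap)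
      (s.piecewise (fun i => t • (s.piecewise (1 : Matrix (Fin m) (Fin m) ℝ) M) i)
        (s.piecewise (1 : Matrix (Fin m) (Fin m) ℝ) M)) = t ^ s.card * minor M sᶜ
  have := (detRowAlternating : (Fin m → ℝ) [⋀^Fin m]→ₗ[ℝ] ℝ).toMultilinearMap.map_piecewise_smul
      (fun _ => t) (s.piecewise (1 : Matrix (Fin m) (Fin m) ℝ) M) s
  rw [this]
  rw [Finset.prod_const, smul_eq_mul]
  congr 1
  exact det_piecewise_one M s


/-- `Esymm` via the coefficient of the eigen-polynomial. -/
lemma esymm_eq_sum_powersetCard {M : Matrix (Fin m) (Fin m) ℝ} (hM : M.IsHermitian) (k : ℕ) :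
    Esymm k M = ∑ S ∈ powersetCard k (univ : Finset (Fin m)), ∏ i ∈ S, hM.eigenvalues i := by
  rw [Esymm, dif_pos hM]

lemma prod_eigenpoly {M : Matrix (Fin m) (Fin m) ℝ} (hM : M.IsHermitian) (t : ℝ) :
    eval t (∏ i : Fin m, (X + C (hM.eigenvalues i)))
      = det (t • (1 : Matrix (Fin m) (Fin m) ℝ) + M) := by
  have := det_smul_one_add_smul hM t 1
  rw [one_smul] at this
  rw [this, eval_prod]
  exact Finset.prod_congr rfl (fun i _ => by simp)

lemma esymm_eq_sum_minors {M : Matrix (Fin m) (Fin m) ℝ} (hM : M.IsHermitian) {k : ℕ}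
    (hk : k ≤ m) :
    Esymm k M = ∑ T ∈ powersetCard k (univ : Finset (Fin m)), minor M T := by
  classical
  set p : Polynomial ℝ := ∏ i : Fin m, (X + C (hM.eigenvalues i)) with hp
  set r : Polynomial ℝ :=
    ∑ s ∈ (univ : Finset (Fin m)).powerset, C (minor M sᶜ) * X ^ s.card with hr
  have hpr : p = r := by
    apply Polynomial.funext
    intro t
    rw [hp, prod_eigenpoly hM t, det_smul_one_add, hr]
    rw [eval_finset_sum]
    exact Finset.sum_congr rfl (fun s _ => by rw [eval_mul, eval_C, eval_pow, eval_X, mul_comm])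
  have hcard : (univ : Finset (Fin m)).card = m := Finset.card_univ.trans (Fintype.card_fin m)
  have h1 : p.coeff (m - k)
      = ∑ S ∈ powersetCard k (univ : Finset (Fin m)), ∏ i ∈ S, hM.eigenvalues i := by
    rw [hp]
    have := Finset.prod_X_add_C_coeff (univ : Finset (Fin m)) hM.eigenvalues
      (k := m - k) (by rw [hcard]; omega)
    have h' : m - (m - k) = k := Nat.sub_sub_self hk
    rw [this, hcard, h']
  have h2 : r.coeff (m - k) = ∑ T ∈ powersetCard k (univ : Finset (Fin m)), minor M T := by
    rw [hr, finset_sum_coeff]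
    simp only [coeff_C_mul_X_pow]
    rw [← Finset.sum_filter]
    have hfilt : (Finset.filter (fun x : Finset (Fin m) => m - k = #x)
        (univ : Finset (Fin m)).powerset) = powersetCard (m - k) (univ : Finset (Fin m)) := by
      rw [Finset.powersetCard_eq_filter]
      ext x
      simp [eq_comm]
    rw [hfilt]
    refine Finset.sum_nbij' (fun s => sᶜ) (fun T => Tᶜ) ?_ ?_ ?_ ?_ ?_
    · intro a ha
      rw [Finset.mem_powersetCard_univ] at ha ⊢
      rw [Finset.card_compl, Fintype.card_fin]
      omega
    · intro a ha
      rw [Finset.mem_powersetCard_univ] at ha ⊢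
      rw [Finset.card_compl, Fintype.card_fin]
      omega
    · intro a _; exact compl_compl a
    · intro a _; exact compl_compl a
    · intro a _; rfl
  rw [esymm_eq_sum_powersetCard hM, ← h1, hpr, h2]

lemma esymm_inv {M : Matrix (Fin m) (Fin m) ℝ} (hM : M.PosDef) {l : ℕ} (hl : l ≤ m) :
    Esymm l M⁻¹
      = (∑ T ∈ powersetCard (m - l) (univ : Finset (Fin m)), minor M T) / M.det := by
  classical
  have hHerm : M.IsHermitian := hM.isHermitian
  have hInv : (M⁻¹).IsHermitian := hHerm.inv
  have hdetpos : 0 < M.det := hM.det_pos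
  have hdetne : M.det ≠ 0 := ne_of_gt hdetpos
  have heigpos : ∀ i, 0 < hHerm.eigenvalues i := hM.eigenvalues_pos
  have hdet_prod : M.det = ∏ i, hHerm.eigenvalues i := by
    simpa using det_smul_one_add_smul hHerm 0 1
  have hfun : ∀ t : ℝ, det (t • (1 : Matrix (Fin m) (Fin m) ℝ) + M⁻¹)
      = ∏ i, (t + (hHerm.eigenvalues i)⁻¹) := by
    intro t
    have hfac : t • (1 : Matrix (Fin m) (Fin m) ℝ) + M⁻¹
        = M⁻¹ * ((1 : Matrix (Fin m) (Fin m) ℝ) + t • M) := by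
      rw [mul_add, mul_one, mul_smul_comm, Matrix.nonsing_inv_mul M hdetne.isUnit, add_comm]
    have hinvdet : (M⁻¹).det = (M.det)⁻¹ := by
      rw [Matrix.det_nonsing_inv, Ring.inverse_eq_inv']
    have h2 : det ((1 : Matrix (Fin m) (Fin m) ℝ) + t • M)
        = ∏ i, (1 + t * hHerm.eigenvalues i) := by
      have := det_smul_one_add_smul hHerm 1 t
      rwa [one_smul] at this
    rw [hfac, det_mul, hinvdet, h2, hdet_prod, ← Finset.prod_inv_distrib,
      ← Finset.prod_mul_distrib]
    exact Finset.prod_congr rfl fun i _ => by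
      rw [inv_mul_eq_div]
      field_simp [(heigpos i).ne']
      ring
  have hpq : (∏ i : Fin m, (X + C (hInv.eigenvalues i)))
      = ∏ i : Fin m, (X + C ((hHerm.eigenvalues i)⁻¹)) := by
    apply Polynomial.funext
    intro t
    rw [prod_eigenpoly hInv t, hfun t, eval_prod]
    exact (Finset.prod_congr rfl fun i _ => by simp).symm
  have hcard : (univ : Finset (Fin m)).card = m := Finset.card_univ.trans (Fintype.card_fin m)
  have h' : m - (m - l) = l := Nat.sub_sub_self hl
  have hL := Finset.prod_X_add_C_coeff (univ : Finset (Fin m)) hInv.eigenvalues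
    (k := m - l) (by rw [hcard]; omega)
  have hR := Finset.prod_X_add_C_coeff (univ : Finset (Fin m))
    (fun i => (hHerm.eigenvalues i)⁻¹) (k := m - l) (by rw [hcard]; omega)
  rw [hcard, h'] at hL hR
  have key : Esymm l M⁻¹
      = ∑ S ∈ powersetCard l (univ : Finset (Fin m)), ∏ i ∈ S, (hHerm.eigenvalues i)⁻¹ := by
    rw [esymm_eq_sum_powersetCard hInv, ← hL, hpq, hR]
  have hterm : ∀ S ∈ powersetCard l (univ : Finset (Fin m)),
      ∏ i ∈ S, (hHerm.eigenvalues i)⁻¹ = (∏ i ∈ Sᶜ, hHerm.eigenvalues i) / M.det := by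
    intro S _
    have hS : (∏ i ∈ S, hHerm.eigenvalues i) ≠ 0 :=
      Finset.prod_ne_zero_iff.mpr fun i _ => (heigpos i).ne'
    have hSc : (∏ i ∈ Sᶜ, hHerm.eigenvalues i) ≠ 0 :=
      Finset.prod_ne_zero_iff.mpr fun i _ => (heigpos i).ne'
    rw [Finset.prod_inv_distrib, hdet_prod, ← Finset.prod_mul_prod_compl S hHerm.eigenvalues]
    field_simp
  rw [key, Finset.sum_congr rfl hterm, ← Finset.sum_div]
  congr 1
  have hmin : ∑ T ∈ powersetCard (m - l) (univ : Finset (Fin m)), ∏ i ∈ T, hHerm.eigenvalues i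
      = ∑ T ∈ powersetCard (m - l) (univ : Finset (Fin m)), minor M T := by
    rw [← esymm_eq_sum_powersetCard hHerm, esymm_eq_sum_minors hHerm (Nat.sub_le m l)]
  rw [← hmin]
  refine Finset.sum_nbij' (fun s => sᶜ) (fun T => Tᶜ) ?_ ?_ ?_ ?_ ?_
  · intro a ha
    rw [Finset.mem_powersetCard_univ] at ha ⊢
    rw [Finset.card_compl, Fintype.card_fin]
    omega
  · intro a ha
    rw [Finset.mem_powersetCard_univ] at ha ⊢
    rw [Finset.card_compl, Fintype.card_fin]
    omega
  · intro a _; exact compl_compl a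
  · intro a _; exact compl_compl a
  · intro a _; rfl


lemma posDef_of_posSemidef_det_ne_zero {P : Matrix ι ι ℝ} (hP : P.PosSemidef)
    (hdet : P.det ≠ 0) : P.PosDef := by
  refine Matrix.PosDef.of_dotProduct_mulVec_pos hP.1 (fun x hx => ?_)
  have h0 : star x ⬝ᵥ P *ᵥ x ≠ 0 := fun h => by
    have hPx := (hP.dotProduct_mulVec_zero_iff x).mp h
    have hinj : Function.Injective P.mulVec :=
      mulVec_injective_iff_isUnit.mpr ((isUnit_iff_isUnit_det P).mpr hdet.isUnit)
    exact hx (hinj (by rw [hPx, Matrix.mulVec_zero]))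
  exact lt_of_le_of_ne (hP.dotProduct_mulVec_nonneg x) (Ne.symm h0)

lemma posSemidef_det_nonneg {P : Matrix ι ι ℝ} (hP : P.PosSemidef) : 0 ≤ P.det := by
  have h := det_smul_one_add_smul hP.1 0 1
  rw [zero_smul, one_smul, zero_add] at h
  rw [h]
  exact Finset.prod_nonneg fun i _ => by simpa using hP.eigenvalues_nonneg i

lemma posDef_smul {P : Matrix ι ι ℝ} (hP : P.PosDef) {c : ℝ} (hc : 0 < c) :
    (c • P).PosDef := by
  refine Matrix.PosDef.of_dotProduct_mulVec_pos ?_ (fun x hx => ?_)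
  · have := hP.1
    unfold Matrix.IsHermitian at *
    rw [conjTranspose_smul, this]
    congr 1
  · rw [smul_mulVec, dotProduct_smul]
    exact mul_pos hc (hP.dotProduct_mulVec_pos hx)

lemma det_one_add_psd {R : Matrix ι ι ℝ} (hR : R.PosSemidef) :
    1 ≤ ((1 : Matrix ι ι ℝ) + R).det ∧
      2 ^ (Fintype.card ι) * Real.sqrt R.det ≤ ((1 : Matrix ι ι ℝ) + R).det := by
  have h := det_smul_one_add_smul hR.1 1 1
  rw [one_smul, one_smul] at h
  have hν : ∀ i, 0 ≤ hR.1.eigenvalues i := fun i => by simpa using hR.eigenvalues_nonneg i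
  have hdet : R.det = ∏ i, hR.1.eigenvalues i := by
    have h0 := det_smul_one_add_smul hR.1 0 1
    rw [zero_smul, one_smul, zero_add] at h0
    rw [h0]
    exact Finset.prod_congr rfl fun i _ => by ring
  constructor
  · rw [h]
    have := Finset.prod_le_prod (s := (univ : Finset ι)) (f := fun _ : ι => (1:ℝ))
      (g := fun i => 1 + 1 * hR.1.eigenvalues i)
      (fun i _ => zero_le_one) (fun i _ => by nlinarith [hν i])
    simpa using this
  · have hsq : Real.sqrt R.det = ∏ i, Real.sqrt (hR.1.eigenvalues i) := by
      rw [hdet]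
      rw [show (∏ i, hR.1.eigenvalues i) = (∏ i, Real.sqrt (hR.1.eigenvalues i)) ^ 2 by
        rw [← Finset.prod_pow]
        exact Finset.prod_congr rfl fun i _ => (Real.sq_sqrt (hν i)).symm]
      exact Real.sqrt_sq (Finset.prod_nonneg fun i _ => Real.sqrt_nonneg _)
    rw [h, hsq, ← Finset.card_univ, ← Finset.prod_const (2:ℝ), ← Finset.prod_mul_distrib]
    exact Finset.prod_le_prod (fun i _ => by positivity)
      (fun i _ => by nlinarith [Real.sq_sqrt (hν i), Real.sqrt_nonneg (hR.1.eigenvalues i), sq_nonneg (Real.sqrt (hR.1.eigenvalues i) - 1)])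

open scoped MatrixOrder in
lemma det_add_factor {P Q : Matrix ι ι ℝ} (hP : P.PosDef) (hQ : Q.PosSemidef) :
    ∃ R : Matrix ι ι ℝ, R.PosSemidef ∧ (P + Q).det = P.det * ((1 : Matrix ι ι ℝ) + R).det ∧
      R.det = Q.det / P.det := by
  classical
  set sq := CFC.sqrt P with hsq
  have hsqPSD : sq.PosSemidef := (CFC.sqrt_nonneg P).posSemidef
  have hsqmul : sq * sq = P := CFC.sqrt_mul_sqrt_self P hP.posSemidef.nonneg
  have hsqdet2 : sq.det * sq.det = P.det := by rw [← det_mul, hsqmul]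
  have hPdet : 0 < P.det := hP.det_pos
  have hsqdetne : sq.det ≠ 0 := fun h => by
    rw [h, mul_zero] at hsqdet2
    exact hPdet.ne' hsqdet2.symm
  have h1 : sq * sq⁻¹ = 1 := Matrix.mul_nonsing_inv sq hsqdetne.isUnit
  have h2 : sq⁻¹ * sq = 1 := Matrix.nonsing_inv_mul sq hsqdetne.isUnit
  have hinvHerm : (sq⁻¹)ᴴ = sq⁻¹ := hsqPSD.1.inv
  refine ⟨sq⁻¹ * Q * sq⁻¹, ?_, ?_, ?_⟩
  · have := hQ.conjTranspose_mul_mul_same sq⁻¹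
    rwa [hinvHerm] at this
  · have hfac : P + Q = sq * ((1 : Matrix ι ι ℝ) + sq⁻¹ * Q * sq⁻¹) * sq := by
      have hc : sq * (sq⁻¹ * Q * sq⁻¹) * sq = (sq * sq⁻¹) * Q * (sq⁻¹ * sq) := by
        noncomm_ring
      rw [Matrix.mul_add, Matrix.add_mul, mul_one, hsqmul, hc, h1, h2, one_mul, mul_one]
    rw [hfac, det_mul, det_mul]
    rw [show sq.det * ((1 : Matrix ι ι ℝ) + sq⁻¹ * Q * sq⁻¹).det * sq.det
        = (sq.det * sq.det) * ((1 : Matrix ι ι ℝ) + sq⁻¹ * Q * sq⁻¹).det by ring, hsqdet2]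
  · have hinvdet : (sq⁻¹).det = (sq.det)⁻¹ := by
      rw [Matrix.det_nonsing_inv, Ring.inverse_eq_inv']
    rw [det_mul, det_mul, hinvdet, ← hsqdet2]
    field_simp

lemma det_le_det_add {P Q : Matrix ι ι ℝ} (hP : P.PosDef) (hQ : Q.PosSemidef) :
    P.det ≤ (P + Q).det := by
  obtain ⟨R, hR, hdet, _⟩ := det_add_factor hP hQ
  rw [hdet]
  nlinarith [(det_one_add_psd hR).1, hP.det_pos]

lemma geom_le_det_add {P Q : Matrix ι ι ℝ} (hP : P.PosDef) (hQ : Q.PosDef) :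
    2 ^ (Fintype.card ι) * Real.sqrt (P.det * Q.det) ≤ (P + Q).det := by
  obtain ⟨R, hR, hdet, hRdet⟩ := det_add_factor hP hQ.posSemidef
  rw [hdet]
  have h2 := (det_one_add_psd hR).2
  rw [hRdet] at h2
  have hP0 := hP.det_pos
  have hQ0 := hQ.det_pos
  have key : Real.sqrt (P.det * Q.det) = P.det * Real.sqrt (Q.det / P.det) := by
    rw [show P.det * Q.det = (P.det) ^ 2 * (Q.det / P.det) by field_simp,
      Real.sqrt_mul (by positivity), Real.sqrt_sq hP0.le]
  rw [key]
  calc 2 ^ (Fintype.card ι) * (P.det * Real.sqrt (Q.det / P.det))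
      = P.det * (2 ^ (Fintype.card ι) * Real.sqrt (Q.det / P.det)) := by ring
    _ ≤ P.det * ((1 : Matrix ι ι ℝ) + R).det := by nlinarith [hP0]

section Schur
variable {k s : Type*} [Fintype k] [Fintype s] [DecidableEq k] [DecidableEq s]

noncomputable def SchurC (X : Matrix (k ⊕ s) (k ⊕ s) ℝ) : Matrix s s ℝ :=
  X.toBlocks₂₂ - X.toBlocks₂₁ * (X.toBlocks₁₁)⁻¹ * X.toBlocks₁₂

lemma posDef_toBlocks₁₁ {X : Matrix (k ⊕ s) (k ⊕ s) ℝ} (hX : X.PosDef) :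
    X.toBlocks₁₁.PosDef := by
  refine Matrix.PosDef.of_dotProduct_mulVec_pos ?_ (fun x hx => ?_)
  · ext i j
    have := hX.1.apply (Sum.inl i) (Sum.inl j)
    simpa [Matrix.toBlocks₁₁, conjTranspose_apply] using this
  · have hx' : (Sum.elim x (0 : s → ℝ)) ≠ 0 := by
      intro hcon
      apply hx
      funext i
      exact congrFun hcon (Sum.inl i)
    have hq := hX.dotProduct_mulVec_pos hx'
    convert hq using 1
    simp [dotProduct, Matrix.mulVec, Fintype.sum_sum_type, Matrix.toBlocks₁₁,
      mul_comm]

lemma herm_toBlocks₂₁ {X : Matrix (k ⊕ s) (k ⊕ s) ℝ} (hX : X.IsHermitian) :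
    X.toBlocks₂₁ = (X.toBlocks₁₂)ᴴ := by
  ext i j
  have := hX.apply (Sum.inr i) (Sum.inl j)
  simpa [Matrix.toBlocks₂₁, Matrix.toBlocks₁₂, conjTranspose_apply] using this.symm

lemma det_eq_det11_mul_schur {X : Matrix (k ⊕ s) (k ⊕ s) ℝ} (hX : X.PosDef) :
    X.det = X.toBlocks₁₁.det * (SchurC X).det := by
  have h11 := posDef_toBlocks₁₁ hX
  haveI : Invertible X.toBlocks₁₁ := X.toBlocks₁₁.invertibleOfIsUnitDet h11.det_pos.ne'.isUnit
  conv_lhs => rw [← fromBlocks_toBlocks X]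
  rw [Matrix.det_fromBlocks₁₁, Matrix.invOf_eq_nonsing_inv]
  rfl

lemma schurC_posDef {X : Matrix (k ⊕ s) (k ⊕ s) ℝ} (hX : X.PosDef) :
    (SchurC X).PosDef := by
  have h11 := posDef_toBlocks₁₁ hX
  haveI : Invertible X.toBlocks₁₁ := X.toBlocks₁₁.invertibleOfIsUnitDet h11.det_pos.ne'.isUnit
  have hpsd : (SchurC X).PosSemidef := by
    have h := (Matrix.PosDef.fromBlocks₁₁ X.toBlocks₁₂ X.toBlocks₂₂ h11).mp
      (by rw [← herm_toBlocks₂₁ hX.1, fromBlocks_toBlocks]; exact hX.posSemidef)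
    unfold SchurC
    rwa [herm_toBlocks₂₁ hX.1]
  have hdeteq := det_eq_det11_mul_schur hX
  have hdet : (SchurC X).det ≠ 0 := by
    intro h0
    rw [h0, mul_zero] at hdeteq
    exact hX.det_pos.ne' hdeteq
  exact posDef_of_posSemidef_det_ne_zero hpsd hdet

lemma schurC_superadd {M N : Matrix (k ⊕ s) (k ⊕ s) ℝ} (hM : M.PosDef) (hN : N.PosDef) :
    (SchurC (M + N) - SchurC M - SchurC N).PosSemidef := by
  have h11M := posDef_toBlocks₁₁ hM
  have h11N := posDef_toBlocks₁₁ hN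
  haveI : Invertible M.toBlocks₁₁ := M.toBlocks₁₁.invertibleOfIsUnitDet h11M.det_pos.ne'.isUnit
  haveI : Invertible N.toBlocks₁₁ := N.toBlocks₁₁.invertibleOfIsUnitDet h11N.det_pos.ne'.isUnit
  have h11MN : (M.toBlocks₁₁ + N.toBlocks₁₁).PosDef := h11M.add h11N
  haveI : Invertible (M.toBlocks₁₁ + N.toBlocks₁₁) :=
    (M.toBlocks₁₁ + N.toBlocks₁₁).invertibleOfIsUnitDet h11MN.det_pos.ne'.isUnit
  have hA : (fromBlocks M.toBlocks₁₁ M.toBlocks₁₂ (M.toBlocks₁₂)ᴴ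
      ((M.toBlocks₁₂)ᴴ * (M.toBlocks₁₁)⁻¹ * M.toBlocks₁₂)).PosSemidef := by
    rw [Matrix.PosDef.fromBlocks₁₁ _ _ h11M, sub_self]
    exact Matrix.PosSemidef.zero
  have hB : (fromBlocks N.toBlocks₁₁ N.toBlocks₁₂ (N.toBlocks₁₂)ᴴ
      ((N.toBlocks₁₂)ᴴ * (N.toBlocks₁₁)⁻¹ * N.toBlocks₁₂)).PosSemidef := by
    rw [Matrix.PosDef.fromBlocks₁₁ _ _ h11N, sub_self]
    exact Matrix.PosSemidef.zero
  have hsum := hA.add hB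
  rw [Matrix.fromBlocks_add, ← conjTranspose_add] at hsum
  have key := (Matrix.PosDef.fromBlocks₁₁
    (M.toBlocks₁₂ + N.toBlocks₁₂) _ h11MN).mp hsum
  have hb11 : (M + N).toBlocks₁₁ = M.toBlocks₁₁ + N.toBlocks₁₁ := rfl
  have hb12 : (M + N).toBlocks₁₂ = M.toBlocks₁₂ + N.toBlocks₁₂ := rfl
  have hb21 : (M + N).toBlocks₂₁ = M.toBlocks₂₁ + N.toBlocks₂₁ := rfl
  have hb22 : (M + N).toBlocks₂₂ = M.toBlocks₂₂ + N.toBlocks₂₂ := rfl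
  have heq : SchurC (M + N) - SchurC M - SchurC N
      = (M.toBlocks₁₂)ᴴ * (M.toBlocks₁₁)⁻¹ * M.toBlocks₁₂
        + (N.toBlocks₁₂)ᴴ * (N.toBlocks₁₁)⁻¹ * N.toBlocks₁₂
        - (M.toBlocks₁₂ + N.toBlocks₁₂)ᴴ * (M.toBlocks₁₁ + N.toBlocks₁₁)⁻¹
            * (M.toBlocks₁₂ + N.toBlocks₁₂) := by
    unfold SchurC
    rw [hb11, hb12, hb21, hb22, herm_toBlocks₂₁ hM.1, herm_toBlocks₂₁ hN.1, ← conjTranspose_add]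
    abel
  rw [heq]
  exact key

lemma core_block {M N : Matrix (k ⊕ s) (k ⊕ s) ℝ} (hM : M.PosDef) (hN : N.PosDef) :
    ((((1:ℝ)/2) • (M + N)).toBlocks₁₁).det / (((1:ℝ)/2) • (M + N)).det
      ≤ Real.sqrt ((M.toBlocks₁₁.det / M.det) * (N.toBlocks₁₁.det / N.det)) := by
  have hMN := hM.add hN
  have hSM := schurC_posDef hM
  have hSN := schurC_posDef hN
  have hSMN := schurC_posDef hMN
  have ha : 0 < (SchurC M).det := hSM.det_pos
  have hb : 0 < (SchurC N).det := hSN.det_pos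
  have hc : 0 < (SchurC (M + N)).det := hSMN.det_pos
  have h2 : 2 ^ (Fintype.card s) * Real.sqrt ((SchurC M).det * (SchurC N).det)
      ≤ (SchurC M + SchurC N).det := geom_le_det_add hSM hSN
  have h1 : (SchurC M + SchurC N).det ≤ (SchurC (M + N)).det := by
    have hE := schurC_superadd hM hN
    calc (SchurC M + SchurC N).det
        ≤ ((SchurC M + SchurC N) + (SchurC (M + N) - SchurC M - SchurC N)).det :=
          det_le_det_add (hSM.add hSN) hE
      _ = (SchurC (M + N)).det := by congr 1; abel
  have hcc : 2 ^ (Fintype.card s) * Real.sqrt ((SchurC M).det * (SchurC N).det)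
      ≤ (SchurC (M + N)).det := le_trans h2 h1
  have hratM : M.toBlocks₁₁.det / M.det = ((SchurC M).det)⁻¹ := by
    rw [det_eq_det11_mul_schur hM]
    have := (posDef_toBlocks₁₁ hM).det_pos
    field_simp
  have hratN : N.toBlocks₁₁.det / N.det = ((SchurC N).det)⁻¹ := by
    rw [det_eq_det11_mul_schur hN]
    have := (posDef_toBlocks₁₁ hN).det_pos
    field_simp
  have hhalf11 : (((1:ℝ)/2) • (M + N)).toBlocks₁₁ = ((1:ℝ)/2) • ((M + N).toBlocks₁₁) := by
    ext i j
    simp [Matrix.toBlocks₁₁]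
  have hLHS : (((1:ℝ)/2) • (M + N)).toBlocks₁₁.det / (((1:ℝ)/2) • (M + N)).det
      = 2 ^ (Fintype.card s) * ((SchurC (M + N)).det)⁻¹ := by
    rw [hhalf11, det_smul, det_smul, Fintype.card_sum, det_eq_det11_mul_schur hMN]
    have h110 : 0 < ((M + N).toBlocks₁₁).det := (posDef_toBlocks₁₁ hMN).det_pos
    rw [div_eq_iff (by positivity)]
    field_simp
    rw [pow_add, mul_left_comm, ← mul_pow]; norm_num
  rw [hLHS, hratM, hratN,
    show ((SchurC M).det)⁻¹ * ((SchurC N).det)⁻¹ = ((SchurC M).det * (SchurC N).det)⁻¹ by ring,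
    Real.sqrt_inv]
  have hsq : 0 < Real.sqrt ((SchurC M).det * (SchurC N).det) := Real.sqrt_pos.mpr (by positivity)
  calc 2 ^ (Fintype.card s) * ((SchurC (M + N)).det)⁻¹
      ≤ 2 ^ (Fintype.card s) * (2 ^ (Fintype.card s)
          * Real.sqrt ((SchurC M).det * (SchurC N).det))⁻¹ := by
        exact mul_le_mul_of_nonneg_left (inv_anti₀ (by positivity) hcc)
          (by positivity)
    _ = (Real.sqrt ((SchurC M).det * (SchurC N).det))⁻¹ := by
        rw [mul_inv]
        have h2pos : (0:ℝ) < 2 ^ (Fintype.card s) := by positivity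
        field_simp

end Schur
section Transfer
variable {m : ℕ}

lemma posDef_submatrix_equiv' {l n : Type*} [Fintype l] [Fintype n] [DecidableEq l]
    [DecidableEq n] {M : Matrix n n ℝ} (hM : M.PosDef) (e : l ≃ n) :
    (M.submatrix e e).PosDef := by
  refine Matrix.PosDef.of_dotProduct_mulVec_pos ?_ (fun x hx => ?_)
  · ext i j
    have := hM.1.apply (e i) (e j)
    simpa [conjTranspose_apply] using this
  · have hx' : (x ∘ e.symm) ≠ 0 := fun hcon => hx (funext fun i => by
      have := congrFun hcon (e i)
      simpa using this)
    have hq := hM.dotProduct_mulVec_pos hx'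
    convert hq using 1
    rw [Matrix.submatrix_mulVec_equiv]
    simp only [dotProduct, Function.comp_apply]
    exact Fintype.sum_equiv e _ _ (fun i => by simp)

lemma toBlocks11_submatrix (M : Matrix (Fin m) (Fin m) ℝ) (T : Finset (Fin m)) :
    ((M.submatrix (Equiv.sumCompl (· ∈ T)) (Equiv.sumCompl (· ∈ T))).toBlocks₁₁ : Matrix _ _ ℝ)
      = M.submatrix (fun i : {x // x ∈ T} => (i : Fin m)) (fun i : {x // x ∈ T} => (i : Fin m)) := by
  ext i j
  simp [Matrix.toBlocks₁₁]

lemma minor_pos {M : Matrix (Fin m) (Fin m) ℝ} (hM : M.PosDef) (T : Finset (Fin m)) :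
    0 < minor M T := by
  have h := posDef_toBlocks₁₁ (posDef_submatrix_equiv' hM (Equiv.sumCompl (· ∈ T)))
  rw [toBlocks11_submatrix] at h
  exact h.det_pos

lemma minor_ratio_le {M N : Matrix (Fin m) (Fin m) ℝ} (hM : M.PosDef) (hN : N.PosDef)
    (T : Finset (Fin m)) :
    minor (((1:ℝ)/2) • (M + N)) T / (((1:ℝ)/2) • (M + N)).det
      ≤ Real.sqrt ((minor M T / M.det) * (minor N T / N.det)) := by
  classical
  set e := Equiv.sumCompl (· ∈ T) with he
  have hM' : (M.submatrix e e).PosDef := posDef_submatrix_equiv' hM e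
  have hN' : (N.submatrix e e).PosDef := posDef_submatrix_equiv' hN e
  have hcore := core_block hM' hN'
  have hsub : (((1:ℝ)/2) • (M + N)).submatrix e e
      = ((1:ℝ)/2) • (M.submatrix e e + N.submatrix e e) := by
    ext i j
    simp
    ring
  have hmm : minor (((1:ℝ)/2) • (M + N)) T
      = (((1:ℝ)/2) • (M.submatrix e e + N.submatrix e e)).toBlocks₁₁.det := by
    rw [← hsub, minor, ← toBlocks11_submatrix]
  have hdd : (((1:ℝ)/2) • (M + N)).det
      = (((1:ℝ)/2) • (M.submatrix e e + N.submatrix e e)).det := by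
    rw [← hsub, Matrix.det_submatrix_equiv_self]
  have h1 : minor M T = (M.submatrix e e).toBlocks₁₁.det := by
    rw [minor, ← toBlocks11_submatrix]
  have h2 : minor N T = (N.submatrix e e).toBlocks₁₁.det := by
    rw [minor, ← toBlocks11_submatrix]
  have h3 : M.det = (M.submatrix e e).det := (Matrix.det_submatrix_equiv_self e M).symm
  have h4 : N.det = (N.submatrix e e).det := (Matrix.det_submatrix_equiv_self e N).symm
  rw [hmm, hdd, h1, h2, h3, h4]
  exact hcore

lemma posDef_conj_rank {n : ℕ} {Z : Matrix (Fin n) (Fin n) ℝ} (hZ : Z.PosDef)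
    {A : Matrix (Fin n) (Fin m) ℝ} (hA : A.rank = m) : (Aᵀ * Z * A).PosDef := by
  have hker : ∀ x : Fin m → ℝ, A.mulVec x = 0 → x = 0 := by
    have hfin : Module.finrank ℝ (Fin m → ℝ) = m := by simp
    have hrn := A.mulVecLin.finrank_range_add_finrank_ker
    rw [show Module.finrank ℝ ↥(LinearMap.range A.mulVecLin) = m from hA, hfin] at hrn
    have hker0 : LinearMap.ker A.mulVecLin = ⊥ := Submodule.finrank_eq_zero.mp (by omega)
    intro x hx
    have hmem : x ∈ LinearMap.ker A.mulVecLin := by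
      rw [LinearMap.mem_ker, Matrix.mulVecLin_apply]
      exact hx
    rw [hker0, Submodule.mem_bot] at hmem
    exact hmem
  refine Matrix.PosDef.of_dotProduct_mulVec_pos ?_ (fun x hx => ?_)
  · show (Aᵀ * Z * A)ᴴ = Aᵀ * Z * A
    have hZh : Zᴴ = Z := hZ.1
    rw [Matrix.conjTranspose_mul, Matrix.conjTranspose_mul, hZh]
    rw [show (Aᵀ)ᴴ = A from ?_, show Aᴴ = Aᵀ from ?_]
    · rw [Matrix.mul_assoc]
    · ext i j; simp [conjTranspose_apply]
    · ext i j; simp [conjTranspose_apply]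
  · have h1 : (Aᵀ * Z * A) *ᵥ x = Aᵀ *ᵥ (Z *ᵥ (A *ᵥ x)) := by
      rw [Matrix.mulVec_mulVec, Matrix.mulVec_mulVec, Matrix.mul_assoc]
    have hAx : A *ᵥ x ≠ 0 := fun h => hx (hker x h)
    have := hZ.dotProduct_mulVec_pos hAx
    rw [star_trivial] at this ⊢
    rwa [h1, Matrix.dotProduct_mulVec, Matrix.vecMul_transpose]

end Transfer

end Aux
end AuxProofs

theorem log_esymm_inv_midpoint_convex {n m : ℕ} (A : Matrix (Fin n) (Fin m) ℝ)
    (hA : A.rank = m) (Z Y : Matrix (Fin n) (Fin n) ℝ)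
    (hZ : Z.PosDef) (hY : Y.PosDef) (ℓ : ℕ) (h1 : 1 ≤ ℓ) (h2 : ℓ ≤ m) :
    Real.log (Esymm ℓ (Aᵀ * ((1 / 2 : ℝ) • (Z + Y)) * A)⁻¹) ≤
      (1 / 2) * Real.log (Esymm ℓ (Aᵀ * Z * A)⁻¹) +
        (1 / 2) * Real.log (Esymm ℓ (Aᵀ * Y * A)⁻¹) := by
  classical
  set M := Aᵀ * Z * A with hMdef
  set N := Aᵀ * Y * A with hNdef
  have hMpd : M.PosDef := Aux.posDef_conj_rank hZ hA
  have hNpd : N.PosDef := Aux.posDef_conj_rank hY hA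
  have hmid : Aᵀ * ((1 / 2 : ℝ) • (Z + Y)) * A = ((1:ℝ)/2) • (M + N) := by
    rw [hMdef, hNdef, Matrix.mul_smul, Matrix.smul_mul, Matrix.mul_add, Matrix.add_mul]
  have hBpd : (((1:ℝ)/2) • (M + N)).PosDef :=
    Aux.posDef_smul (hMpd.add hNpd) (by norm_num)
  have hEM := Aux.esymm_inv hMpd (l := ℓ) h2
  have hEN := Aux.esymm_inv hNpd (l := ℓ) h2
  have hEB := Aux.esymm_inv hBpd (l := ℓ) h2
  have hne : (powersetCard (m - ℓ) (univ : Finset (Fin m))).Nonempty :=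
    Finset.powersetCard_nonempty.mpr (by simpa using Nat.sub_le m ℓ)
  have hdM : 0 < M.det := hMpd.det_pos
  have hdN : 0 < N.det := hNpd.det_pos
  have hdB : 0 < (((1:ℝ)/2) • (M + N)).det := hBpd.det_pos
  have hsM : 0 < ∑ T ∈ powersetCard (m - ℓ) (univ : Finset (Fin m)), Aux.minor M T :=
    Finset.sum_pos (fun T _ => Aux.minor_pos hMpd T) hne
  have hsN : 0 < ∑ T ∈ powersetCard (m - ℓ) (univ : Finset (Fin m)), Aux.minor N T :=
    Finset.sum_pos (fun T _ => Aux.minor_pos hNpd T) hne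
  have hsB : 0 < ∑ T ∈ powersetCard (m - ℓ) (univ : Finset (Fin m)),
      Aux.minor (((1:ℝ)/2) • (M + N)) T :=
    Finset.sum_pos (fun T _ => Aux.minor_pos hBpd T) hne
  have hposM : 0 < Esymm ℓ M⁻¹ := by rw [hEM]; exact div_pos hsM hdM
  have hposN : 0 < Esymm ℓ N⁻¹ := by rw [hEN]; exact div_pos hsN hdN
  have hposB : 0 < Esymm ℓ (((1:ℝ)/2) • (M + N))⁻¹ := by rw [hEB]; exact div_pos hsB hdB
  have hf0 : ∀ T : Finset (Fin m), 0 ≤ Aux.minor M T / M.det :=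
    fun T => le_of_lt (by have := Aux.minor_pos hMpd T; positivity)
  have hg0 : ∀ T : Finset (Fin m), 0 ≤ Aux.minor N T / N.det :=
    fun T => le_of_lt (by have := Aux.minor_pos hNpd T; positivity)
  have key : Esymm ℓ (((1:ℝ)/2) • (M + N))⁻¹
      ≤ Real.sqrt ((Esymm ℓ M⁻¹) * (Esymm ℓ N⁻¹)) := by
    rw [hEB, hEM, hEN, Finset.sum_div]
    have step1 : ∑ T ∈ powersetCard (m - ℓ) (univ : Finset (Fin m)),
          Aux.minor (((1:ℝ)/2) • (M + N)) T / (((1:ℝ)/2) • (M + N)).det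
        ≤ ∑ T ∈ powersetCard (m - ℓ) (univ : Finset (Fin m)),
          Real.sqrt ((Aux.minor M T / M.det) * (Aux.minor N T / N.det)) :=
      Finset.sum_le_sum (fun T _ => Aux.minor_ratio_le hMpd hNpd T)
    refine le_trans step1 ?_
    have step2 : ∀ T ∈ powersetCard (m - ℓ) (univ : Finset (Fin m)),
        Real.sqrt ((Aux.minor M T / M.det) * (Aux.minor N T / N.det))
          = Real.sqrt (Aux.minor M T / M.det) * Real.sqrt (Aux.minor N T / N.det) :=
      fun T _ => Real.sqrt_mul (hf0 T) _
    rw [Finset.sum_congr rfl step2]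
    refine (Real.le_sqrt (Finset.sum_nonneg fun T _ =>
        mul_nonneg (Real.sqrt_nonneg _) (Real.sqrt_nonneg _))
      (le_of_lt (mul_pos (div_pos hsM hdM) (div_pos hsN hdN)))).mpr ?_
    calc (∑ T ∈ powersetCard (m - ℓ) (univ : Finset (Fin m)),
          Real.sqrt (Aux.minor M T / M.det) * Real.sqrt (Aux.minor N T / N.det)) ^ 2
        ≤ (∑ T ∈ powersetCard (m - ℓ) (univ : Finset (Fin m)),
            Real.sqrt (Aux.minor M T / M.det) ^ 2)
          * (∑ T ∈ powersetCard (m - ℓ) (univ : Finset (Fin m)),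
            Real.sqrt (Aux.minor N T / N.det) ^ 2) :=
          Finset.sum_mul_sq_le_sq_mul_sq _ _ _
      _ = (∑ T ∈ powersetCard (m - ℓ) (univ : Finset (Fin m)), Aux.minor M T / M.det)
          * (∑ T ∈ powersetCard (m - ℓ) (univ : Finset (Fin m)), Aux.minor N T / N.det) := by
          rw [Finset.sum_congr rfl (fun T _ => Real.sq_sqrt (hf0 T)),
            Finset.sum_congr rfl (fun T _ => Real.sq_sqrt (hg0 T))]
      _ = ((∑ T ∈ powersetCard (m - ℓ) (univ : Finset (Fin m)), Aux.minor M T) / M.det)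
          * ((∑ T ∈ powersetCard (m - ℓ) (univ : Finset (Fin m)), Aux.minor N T) / N.det) := by
          rw [← Finset.sum_div, ← Finset.sum_div]
  rw [hmid]
  have hlog := Real.log_le_log hposB key
  rw [Real.log_sqrt (le_of_lt (mul_pos hposM hposN)), Real.log_mul hposM.ne' hposN.ne'] at hlog
  linarith
end

section
/- Let X ∈ ℝ^{n×m} with n ≥ m have full column rank and let m ≤ k ≤ n. Then Σ_{S ⊆ [n], |S|=k} det(X_Sᵀ X_S) = C(n−m, k−m) · det(Xᵀ X), where X_S is the submatrix of X consisting of rows indexed by S. -/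
open Matrix Finset Equiv

/-- The submatrix of `X` keeping only the rows indexed by `S`. -/
def rowSub {n m : ℕ} (X : Matrix (Fin n) (Fin m) ℝ) (S : Finset (Fin n)) :
    Matrix {i // i ∈ S} (Fin m) ℝ :=
  X.submatrix Subtype.val id


variable {m : ℕ} {ι : Type*} [Fintype ι] [DecidableEq ι] [LinearOrder ι]

/-- The minor of an `ι × m` matrix given by the rows in `T` (in increasing order). -/
noncomputable def rowMinor {m : ℕ} {ι : Type*} [LinearOrder ι]
    (N : Matrix ι (Fin m) ℝ) (T : Finset ι) : ℝ :=
  if h : T.card = m then (N.submatrix (T.orderEmbOfFin h) id).det else 0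

lemma step1 (M : Matrix (Fin m) ι ℝ) (N : Matrix ι (Fin m) ℝ) :
    (M * N).det = ∑ p : Fin m → ι, (M.submatrix id p).det * ∏ i, N (p i) i := by
  have h1 : (M * N).det
      = ∑ p : Fin m → ι, ∑ σ : Perm (Fin m),
          ((Equiv.Perm.sign σ : ℤ) : ℝ) * ∏ i, M (σ i) (p i) * N (p i) i := by
    simp only [det_apply', mul_apply, prod_univ_sum, mul_sum, Fintype.piFinset_univ]
    rw [Finset.sum_comm]
  rw [h1]
  refine Finset.sum_congr rfl fun p _ => ?_
  rw [det_apply', Finset.sum_mul]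
  refine Finset.sum_congr rfl fun σ _ => ?_
  simp [Finset.prod_mul_distrib, mul_assoc]

set_option linter.unusedSectionVars false

lemma card_image_eq (p : Fin m → ι) (hp : Function.Injective p) :
    (Finset.image p univ).card = m := by
  rw [Finset.card_image_of_injective _ hp, card_univ, Fintype.card_fin]

/-- The permutation sorting an injective function. -/
noncomputable def sigmaOf (p : Fin m → ι) (hp : Function.Injective p) : Perm (Fin m) :=
  Equiv.ofBijective
    (fun i => ((Finset.image p univ).orderIsoOfFin (card_image_eq p hp)).symm
      ⟨p i, Finset.mem_image_of_mem p (mem_univ i)⟩)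
    (Finite.injective_iff_bijective.mp (fun a b hab => hp
      (congrArg Subtype.val
        (((Finset.image p univ).orderIsoOfFin (card_image_eq p hp)).symm.injective hab))))

lemma sigmaOf_spec (p : Fin m → ι) (hp : Function.Injective p) (i : Fin m) :
    (Finset.image p univ).orderEmbOfFin (card_image_eq p hp) (sigmaOf p hp i) = p i := by
  rw [sigmaOf, Equiv.ofBijective_apply, ← Finset.coe_orderIsoOfFin_apply,
    OrderIso.apply_symm_apply]

lemma cauchy_binet (M : Matrix (Fin m) ι ℝ) (N : Matrix ι (Fin m) ℝ) :
    (M * N).det = ∑ T ∈ powersetCard m (univ : Finset ι),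
      rowMinor Mᵀ T * rowMinor N T := by
  rw [step1]
  -- drop non-injective p
  rw [← Finset.sum_filter_of_ne (p := fun p : Fin m → ι => Function.Injective p)
    (by
      intro p _ hne
      by_contra hinj
      apply hne
      have : (M.submatrix id p).det = 0 := by
        obtain ⟨i, j, hpij, hij⟩ : ∃ i j, p i = p j ∧ i ≠ j := by
          rw [Function.Injective] at hinj
          push_neg at hinj
          obtain ⟨i, j, h1, h2⟩ := hinj
          exact ⟨i, j, h1, h2⟩
        exact Matrix.det_zero_of_column_eq hij (fun k => by simp [hpij])
      simp [this])]
  -- reindex by (T, σ)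
  rw [← Finset.sum_attach (powersetCard m (univ : Finset ι))
    (fun T => rowMinor Mᵀ T * rowMinor N T)]
  have key : ∀ T : {x // x ∈ powersetCard m (univ : Finset ι)},
      rowMinor Mᵀ T.1 * rowMinor N T.1
        = ∑ σ : Perm (Fin m),
            (M.submatrix id ((T.1.orderEmbOfFin (mem_powersetCard_univ.mp T.2)) ∘ σ)).det
              * ∏ i, N (T.1.orderEmbOfFin (mem_powersetCard_univ.mp T.2) (σ i)) i := by
    intro T
    have hT := mem_powersetCard_univ.mp T.2
    set e := T.1.orderEmbOfFin hT with he
    have : ∀ σ : Perm (Fin m),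
        (M.submatrix id (e ∘ σ)).det = ((Perm.sign σ : ℤ) : ℝ) * (M.submatrix id e).det := by
      intro σ
      have : M.submatrix id (e ∘ σ) = (M.submatrix id e).submatrix id σ := rfl
      rw [this, Matrix.det_permute']
    simp_rw [this]
    rw [rowMinor, rowMinor, dif_pos hT, dif_pos hT]
    have hMt : ((Mᵀ).submatrix (e : Fin m → ι) id).det = (M.submatrix id e).det := by
      rw [← Matrix.det_transpose (M.submatrix id (e : Fin m → ι))]
      rfl
    rw [hMt, det_apply' (N.submatrix (e : Fin m → ι) id), Finset.mul_sum]
    refine Finset.sum_congr rfl fun σ _ => ?_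
    simp only [submatrix_apply, id_eq]
    ring
  simp_rw [key]
  rw [← Finset.sum_product' (γ := _)]
  refine Finset.sum_bij'
    (i := fun p hp =>
      (⟨Finset.image p univ,
          mem_powersetCard_univ.mpr (card_image_eq p (Finset.mem_filter.mp hp).2)⟩,
        sigmaOf p (Finset.mem_filter.mp hp).2))
    (j := fun x hx => (x.1.1.orderEmbOfFin (mem_powersetCard_univ.mp x.1.2)) ∘ x.2)
    (hi := fun p hp => by simp)
    (hj := fun x hx =>
      Finset.mem_filter.mpr ⟨mem_univ _,
        (x.1.1.orderEmbOfFin (mem_powersetCard_univ.mp x.1.2)).injective.comp x.2.injective⟩)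
    (left_neg := ?_) (right_neg := ?_) (h := ?_)
  · intro p hp
    funext i
    exact sigmaOf_spec p (Finset.mem_filter.mp hp).2 i
  · intro x hx
    set e := x.1.1.orderEmbOfFin (mem_powersetCard_univ.mp x.1.2) with he
    have hinj : Function.Injective (⇑e ∘ ⇑x.2) := e.injective.comp x.2.injective
    have hT : Finset.image (⇑e ∘ ⇑x.2) univ = x.1.1 := by
      ext a
      simp only [Finset.mem_image, Function.comp_apply]
      constructor
      · rintro ⟨i, -, rfl⟩
        exact Finset.orderEmbOfFin_mem _ _ _
      · intro ha
        refine ⟨x.2.symm ((x.1.1.orderIsoOfFin (mem_powersetCard_univ.mp x.1.2)).symm ⟨a, ha⟩),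
          mem_univ _, ?_⟩
        rw [Equiv.apply_symm_apply, he, ← Finset.coe_orderIsoOfFin_apply,
          OrderIso.apply_symm_apply]
    have hee : ∀ j, (Finset.image (⇑e ∘ ⇑x.2) univ).orderEmbOfFin
        (card_image_eq _ hinj) j = e j := by
      have := Finset.orderEmbOfFin_unique (card_image_eq _ hinj)
        (f := fun j => e j) (fun j => by rw [hT]; exact Finset.orderEmbOfFin_mem _ _ _)
        e.strictMono
      exact fun j => (congrFun this j).symm
    refine Prod.ext (Subtype.ext hT) ?_
    refine Equiv.ext fun i => ?_
    unfold sigmaOf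
    rw [Equiv.ofBijective_apply]
    have key : (Finset.image (⇑e ∘ ⇑x.2) univ).orderIsoOfFin (card_image_eq _ hinj) (x.2 i)
        = ⟨(⇑e ∘ ⇑x.2) i, Finset.mem_image_of_mem _ (mem_univ i)⟩ := by
      refine Subtype.ext ?_
      rw [Finset.coe_orderIsoOfFin_apply, hee]
      rfl
    rw [← key, OrderIso.symm_apply_apply]
  · intro p hp
    have hpi := (Finset.mem_filter.mp hp).2
    have hco : (⇑((Finset.image p univ).orderEmbOfFin
        (mem_powersetCard_univ.mp
          (mem_powersetCard_univ.mpr (card_image_eq p hpi))))) ∘ ⇑(sigmaOf p hpi)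
        = p := funext fun i => sigmaOf_spec p hpi i
    simp only [hco]
    congr 1
    refine Finset.prod_congr rfl fun i _ => ?_
    have := congrFun hco i
    simp only [Function.comp_apply] at this
    rw [this]

lemma det_gram (A : Matrix ι (Fin m) ℝ) :
    (Aᵀ * A).det = ∑ T ∈ powersetCard m (univ : Finset ι), (rowMinor A T)^2 := by
  rw [cauchy_binet]
  exact Finset.sum_congr rfl fun T _ => by rw [transpose_transpose, sq]

lemma rowMinor_rowSub {n m : ℕ} (X : Matrix (Fin n) (Fin m) ℝ) (S : Finset (Fin n))
    (T : Finset {i // i ∈ S}) :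
    rowMinor (rowSub X S) T = rowMinor X (T.map (Function.Embedding.subtype _)) := by
  rw [rowMinor, rowMinor]
  have hc : (T.map (Function.Embedding.subtype _)).card = T.card := Finset.card_map _
  by_cases h : T.card = m
  · rw [dif_pos h, dif_pos (hc.trans h)]
    congr 1
    ext i j
    simp only [rowSub, submatrix_apply, id_eq]
    congr 1
    have : (fun i => ((T.orderEmbOfFin h i : {i // i ∈ S}) : Fin n))
        = (T.map (Function.Embedding.subtype _)).orderEmbOfFin (hc.trans h) := by
      apply Finset.orderEmbOfFin_unique
      · intro x
        exact Finset.mem_map_of_mem _ (Finset.orderEmbOfFin_mem _ _ _)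
      · exact fun a b hab => (T.orderEmbOfFin h).strictMono hab
    exact congrFun this i
  · rw [dif_neg h, dif_neg (fun hh => h (hc.symm.trans hh))]

lemma count_supersets {α : Type*} [Fintype α] [DecidableEq α] {m k : ℕ}
    (T : Finset α) (hT : T.card = m) (hmk : m ≤ k) :
    ((powersetCard k (univ : Finset α)).filter (fun S => T ⊆ S)).card
      = (Fintype.card α - m).choose (k - m) := by
  have : ((powersetCard k (univ : Finset α)).filter (fun S => T ⊆ S)).card
      = (powersetCard (k - m) Tᶜ).card := by
    refine Finset.card_bij' (fun S _ => S \ T) (fun U _ => U ∪ T) ?_ ?_ ?_ ?_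
    · intro S hS
      obtain ⟨hS1, hTS⟩ := Finset.mem_filter.mp hS
      have hcard := mem_powersetCard_univ.mp hS1
      refine Finset.mem_powersetCard.mpr ⟨?_, ?_⟩
      · intro x hx
        simp only [Finset.mem_compl]
        exact (Finset.mem_sdiff.mp hx).2
      · rw [Finset.card_sdiff_of_subset hTS, hcard, hT]
    · intro U hU
      obtain ⟨hUc, hUcard⟩ := Finset.mem_powersetCard.mp hU
      have hdisj : Disjoint U T := by
        rw [Finset.disjoint_left]
        intro x hx hxT
        exact (Finset.mem_compl.mp (hUc hx)) hxT
      refine Finset.mem_filter.mpr ⟨mem_powersetCard_univ.mpr ?_, Finset.subset_union_right⟩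
      rw [Finset.card_union_of_disjoint hdisj, hUcard, hT]
      omega
    · intro S hS
      exact Finset.sdiff_union_of_subset (Finset.mem_filter.mp hS).2
    · intro U hU
      obtain ⟨hUc, _⟩ := Finset.mem_powersetCard.mp hU
      have hdisj : Disjoint U T := by
        rw [Finset.disjoint_left]
        intro x hx hxT
        exact (Finset.mem_compl.mp (hUc hx)) hxT
      show (U ∪ T) \ T = U
      rw [Finset.union_sdiff_distrib, Finset.sdiff_self, Finset.union_empty,
        Finset.sdiff_eq_self_of_disjoint hdisj]
  rw [this, Finset.card_powersetCard, Finset.card_compl, hT]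

theorem sum_det_gram_subsets' {n m : ℕ} (X : Matrix (Fin n) (Fin m) ℝ)
    (k : ℕ) (hmk : m ≤ k) (hkn : k ≤ n) :
    ∑ S ∈ Finset.powersetCard k (Finset.univ : Finset (Fin n)),
        ((rowSub X S)ᵀ * rowSub X S).det =
      ((n - m).choose (k - m) : ℝ) * (Xᵀ * X).det := by
  have step : ∀ S : Finset (Fin n), ((rowSub X S)ᵀ * rowSub X S).det
      = ∑ T ∈ powersetCard m S, (rowMinor X T)^2 := by
    intro S
    rw [det_gram]
    have h1 : powersetCard m S
        = (powersetCard m (univ : Finset {i // i ∈ S})).map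
            (Finset.mapEmbedding (Function.Embedding.subtype _)).toEmbedding := by
      rw [← Finset.powersetCard_map]
      congr 1
      rw [Finset.univ_eq_attach, Finset.attach_map_val]
    rw [h1, Finset.sum_map]
    refine Finset.sum_congr rfl fun T _ => ?_
    rw [rowMinor_rowSub]
    rfl
  simp_rw [step]
  have h2 : ∀ S : Finset (Fin n), S ∈ powersetCard k (univ : Finset (Fin n)) →
      ∑ T ∈ powersetCard m S, (rowMinor X T)^2
        = ∑ T ∈ powersetCard m (univ : Finset (Fin n)),
            if T ⊆ S then (rowMinor X T)^2 else 0 := by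
    intro S _
    rw [← Finset.sum_filter]
    congr 1
    ext T
    simp only [Finset.mem_powersetCard, Finset.mem_filter, Finset.subset_univ, true_and]
    tauto
  rw [Finset.sum_congr rfl h2, Finset.sum_comm]
  have h3 : ∀ T : Finset (Fin n), T ∈ powersetCard m (univ : Finset (Fin n)) →
      ∑ S ∈ powersetCard k (univ : Finset (Fin n)),
          (if T ⊆ S then (rowMinor X T)^2 else 0)
        = ((n - m).choose (k - m) : ℝ) * (rowMinor X T)^2 := by
    intro T hT
    rw [← Finset.sum_filter, Finset.sum_const, nsmul_eq_mul,
      count_supersets T (mem_powersetCard_univ.mp hT) hmk, Fintype.card_fin]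
  rw [Finset.sum_congr rfl h3, ← Finset.mul_sum, det_gram]

theorem sum_det_gram_subsets {n m : ℕ} (X : Matrix (Fin n) (Fin m) ℝ)
    (hX : X.rank = m) (k : ℕ) (hmk : m ≤ k) (hkn : k ≤ n) :
    ∑ S ∈ Finset.powersetCard k (Finset.univ : Finset (Fin n)),
        ((rowSub X S)ᵀ * rowSub X S).det =
      ((n - m).choose (k - m) : ℝ) * (Xᵀ * X).det :=
  sum_det_gram_subsets' X k hmk hkn
end

section
/- Let X ∈ ℝ^{n×m} have full column rank and m ≤ k ≤ n, and let 1 ≤ ℓ ≤ m. Then Σ_{S ⊆ [n], |S|=k} det(X_Sᵀ X_S) · E_ℓ((X_Sᵀ X_S)⁻¹) ≤ C(n−m+ℓ, k−m+ℓ) · E_{m−ℓ}(Xᵀ X), where the summand is taken to be E_{m-ℓ}(X_SᵀX_S) (which equals det(X_SᵀX_S)·E_ℓ((X_SᵀX_S)⁻¹) when X_SᵀX_S is invertible), with equality when X_Sᵀ X_S is positive definite for all S of size k. -/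
open Matrix Finset Polynomial

variable {ι : Type*} [Fintype ι] [DecidableEq ι] {R : Type*} [CommRing R]

lemma det_piecewise_one (N : Matrix ι ι R) (S : Finset ι) :
    Matrix.det (Matrix.of (S.piecewise (fun i => (1 : Matrix ι ι R) i) (fun i => N i)))
      = Matrix.det (N.submatrix (Subtype.val : {i // i ∉ S} → ι) Subtype.val) := by
  classical
  let e : { i // i ∈ S } ⊕ { i // i ∉ S } ≃ ι := Equiv.sumCompl (· ∈ S)
  rw [← Matrix.det_submatrix_equiv_self e]
  have h : (Matrix.of (S.piecewise (fun i => (1 : Matrix ι ι R) i) (fun i => N i))).submatrix e e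
      = Matrix.fromBlocks 1 0 (N.submatrix Subtype.val Subtype.val)
          (N.submatrix Subtype.val Subtype.val) := by
    ext i j
    cases i with
    | inl a =>
      cases j with
      | inl b =>
        simp [e, Finset.piecewise, a.2, Matrix.one_apply]
      | inr b =>
        have : a.1 ≠ b.1 := fun h => b.2 (h ▸ a.2)
        simp [e, Finset.piecewise, a.2, Matrix.one_apply, this]
    | inr a =>
      cases j with
      | inl b => simp [e, Finset.piecewise, a.2]
      | inr b => simp [e, Finset.piecewise, a.2]
  rw [h, Matrix.det_fromBlocks_zero₁₂, Matrix.det_one, one_mul]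

lemma det_X_smul_one_add_map (M : Matrix ι ι R) :
    Matrix.det ((X : R[X]) • (1 : Matrix ι ι R[X]) + M.map C)
      = ∑ s : Finset ι, X ^ s.card *
          C (Matrix.det (M.submatrix (Subtype.val : {i // i ∉ s} → ι) Subtype.val)) := by
  classical
  have hdet : Matrix.det ((X : R[X]) • (1 : Matrix ι ι R[X]) + M.map C)
      = (Matrix.detRowAlternating).toMultilinearMap
          ((fun i => (X : R[X]) • (1 : Matrix ι ι R[X]) i) + (fun i => (M.map C) i)) := rfl
  rw [hdet, (Matrix.detRowAlternating).toMultilinearMap.map_add_univ]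
  refine Finset.sum_congr rfl fun s _ => ?_
  have hm : s.piecewise (fun i => (X : R[X]) • (1 : Matrix ι ι R[X]) i) (fun i => (M.map C) i)
      = s.piecewise (fun i => (X : R[X]) • (s.piecewise (fun i => (1 : Matrix ι ι R[X]) i)
          (fun i => (M.map C) i)) i)
        (s.piecewise (fun i => (1 : Matrix ι ι R[X]) i) (fun i => (M.map C) i)) := by
    funext i
    by_cases hi : i ∈ s <;> simp [Finset.piecewise, hi]
  rw [hm, (Matrix.detRowAlternating).toMultilinearMap.map_piecewise_smul]
  have h2 : (Matrix.detRowAlternating).toMultilinearMap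
      (s.piecewise (fun i => (1 : Matrix ι ι R[X]) i) (fun i => (M.map C) i))
      = Matrix.det ((M.map C).submatrix (Subtype.val : {i // i ∉ s} → ι) Subtype.val) :=
    det_piecewise_one (M.map C) s
  rw [h2]
  rw [Finset.prod_const, smul_eq_mul]
  congr 1
  rw [Matrix.submatrix_map]
  exact (RingHom.map_det C _).symm

lemma det_X_smul_one_add_map_eq_prod {d : ℕ} (M : Matrix (Fin d) (Fin d) ℝ)
    (hM : M.IsHermitian) :
    Matrix.det ((X : ℝ[X]) • (1 : Matrix (Fin d) (Fin d) ℝ[X]) + M.map C)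
      = ∏ i, (X + C (hM.eigenvalues i)) := by
  classical
  set V : Matrix (Fin d) (Fin d) ℝ := (hM.eigenvectorUnitary : Matrix (Fin d) (Fin d) ℝ) with hV
  have hVU : V * star V = 1 := (Matrix.mem_unitaryGroup_iff).mp (hM.eigenvectorUnitary).2
  have hspec : M = V * Matrix.diagonal hM.eigenvalues * star V := by
    simpa [RCLike.ofReal_real_eq_id] using hM.spectral_theorem
  have key : (X : ℝ[X]) • (1 : Matrix (Fin d) (Fin d) ℝ[X]) + M.map C
      = (V.map C) * ((X : ℝ[X]) • (1 : Matrix (Fin d) (Fin d) ℝ[X])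
          + (Matrix.diagonal hM.eigenvalues).map C) * ((star V).map C) := by
    rw [Matrix.mul_add, Matrix.add_mul]
    congr 1
    · rw [Matrix.mul_smul, Matrix.mul_one, Matrix.smul_mul, ← Matrix.map_mul, hVU,
        Matrix.map_one C C.map_zero C.map_one]
    · rw [← Matrix.map_mul, ← Matrix.map_mul, ← hspec]
  rw [key, Matrix.det_mul, Matrix.det_mul]
  have hone : (V.map C).det * ((star V).map C).det = 1 := by
    rw [show (V.map ⇑C).det = C V.det from (RingHom.map_det C V).symm,
      show ((star V).map ⇑C).det = C (star V).det from (RingHom.map_det C (star V)).symm,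
      ← _root_.map_mul, ← Matrix.det_mul, hVU, Matrix.det_one, _root_.map_one]
  have hmid : (X : ℝ[X]) • (1 : Matrix (Fin d) (Fin d) ℝ[X])
      + (Matrix.diagonal hM.eigenvalues).map C
      = Matrix.diagonal (fun i => X + C (hM.eigenvalues i)) := by
    rw [Matrix.smul_one_eq_diagonal, Matrix.diagonal_map C.map_zero, ← Matrix.diagonal_add]
  rw [hmid, Matrix.det_diagonal]
  calc (V.map C).det * (∏ i, (X + C (hM.eigenvalues i))) * ((star V).map C).det
      = ((V.map C).det * ((star V).map C).det)
        * ∏ i, (X + C (hM.eigenvalues i)) := by ring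
    _ = _ := by rw [hone, one_mul]

lemma Esymm_eq_sum_minors {d : ℕ} (M : Matrix (Fin d) (Fin d) ℝ) (hM : M.IsHermitian)
    {j : ℕ} (hj : j ≤ d) :
    Esymm j M = ∑ T ∈ powersetCard j (univ : Finset (Fin d)),
      (M.submatrix (Subtype.val : {i // i ∈ T} → Fin d) Subtype.val).det := by
  classical
  have h1 : Esymm j M = (∏ i, (X + C (hM.eigenvalues i))).coeff (d - j) := by
    rw [Esymm, dif_pos hM, Finset.prod_X_add_C_coeff _ _
      (by rw [Finset.card_univ, Fintype.card_fin]; omega),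
      show #(univ : Finset (Fin d)) - (d - j) = j from by
        rw [Finset.card_univ, Fintype.card_fin]; omega]
  rw [h1, ← det_X_smul_one_add_map_eq_prod M hM, det_X_smul_one_add_map,
    Polynomial.finset_sum_coeff]
  have h2 : ∀ s : Finset (Fin d),
      ((X : ℝ[X]) ^ #s * C ((M.submatrix (Subtype.val : {i // i ∉ s} → Fin d)
        Subtype.val).det)).coeff (d - j)
      = if #s = d - j
        then (M.submatrix (Subtype.val : {i // i ∉ s} → Fin d) Subtype.val).det else 0 := by
    intro s
    rw [mul_comm, Polynomial.coeff_C_mul_X_pow]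
    simp [eq_comm]
  simp only [h2]
  rw [← Finset.sum_filter]
  have h3 : (univ : Finset (Finset (Fin d))).filter (fun s => #s = d - j)
      = powersetCard (d - j) (univ : Finset (Fin d)) := by
    ext s; simp [Finset.mem_powersetCard_univ]
  rw [h3]
  have hdet : ∀ s : Finset (Fin d),
      (M.submatrix (Subtype.val : {i // i ∉ s} → Fin d) Subtype.val).det
      = (M.submatrix (Subtype.val : {i // i ∈ sᶜ} → Fin d) Subtype.val).det := by
    intro s
    exact (Matrix.det_submatrix_equiv_self
      (Equiv.subtypeEquivRight (fun x => Finset.mem_compl)) _).symm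
  refine Finset.sum_bij' (fun s _ => sᶜ) (fun T _ => Tᶜ) ?_ ?_ ?_ ?_ ?_ |>.symm
  · intro s hs
    rw [Finset.mem_powersetCard_univ] at hs ⊢
    rw [Finset.card_compl, Fintype.card_fin, hs]
  · intro T hT
    rw [Finset.mem_powersetCard_univ] at hT ⊢
    rw [Finset.card_compl, Fintype.card_fin, hT]; omega
  · intro s _; exact compl_compl s
  · intro T _; exact compl_compl T
  · intro s _
    exact (Matrix.det_submatrix_equiv_self
      (Equiv.subtypeEquivRight (fun x => by simp)) _).symm

noncomputable section GramSec
variable {n : ℕ} {κ : Type*} [Fintype κ] [DecidableEq κ]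

def gramS (Y : Matrix (Fin n) κ ℝ) (S : Finset (Fin n)) : Matrix κ κ ℝ :=
  Matrix.of fun p q => ∑ i ∈ S, Y i p * Y i q

lemma det_gramS (Y : Matrix (Fin n) κ ℝ) (S : Finset (Fin n)) :
    (gramS Y S).det = ∑ f ∈ Fintype.piFinset (fun _ : κ => S),
      (∏ p, Y (f p) p) * (Y.submatrix f id).det := by
  have h0 : (gramS Y S).det
      = (Matrix.detRowAlternating).toMultilinearMap (fun p => ∑ i ∈ S, Y i p • Y i) := by
    congr 1
    funext p q
    simp [gramS, Finset.sum_apply]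
  rw [h0, MultilinearMap.map_sum_finset _ (fun p i => Y i p • Y i) (fun _ => S)]
  refine Finset.sum_congr rfl fun f _ => ?_
  have h1 : (Matrix.detRowAlternating).toMultilinearMap (fun p => Y (f p) p • Y (f p))
      = (∏ p, Y (f p) p) • (Matrix.detRowAlternating).toMultilinearMap (fun p => Y (f p)) :=
    MultilinearMap.map_smul_univ _ _ _
  rw [h1, smul_eq_mul]
  rfl

lemma det_submatrix_zero_of_not_injective (Y : Matrix (Fin n) κ ℝ) {f : κ → Fin n}
    (hf : ¬ Function.Injective f) : (Y.submatrix f id).det = 0 := by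
  simp only [Function.Injective, not_forall] at hf
  obtain ⟨p, q, hfq, hpq⟩ := hf
  refine Matrix.det_zero_of_row_eq hpq ?_
  funext r
  simp [Matrix.submatrix, hfq]

lemma card_filter_supersets {k : ℕ} (R : Finset (Fin n)) (hk : #R ≤ k) (hkn : k ≤ n) :
    #((powersetCard k (univ : Finset (Fin n))).filter (fun S => R ⊆ S))
      = (n - #R).choose (k - #R) := by
  have hcompl : #(Rᶜ) = n - #R := by rw [Finset.card_compl, Fintype.card_fin]
  rw [← hcompl, ← Finset.card_powersetCard (k - #R) Rᶜ]
  refine Finset.card_bij' (fun S _ => S \ R) (fun T _ => T ∪ R) ?_ ?_ ?_ ?_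
  · intro S hS
    rw [Finset.mem_filter, Finset.mem_powersetCard_univ] at hS
    rw [Finset.mem_powersetCard]
    refine ⟨fun x hx => ?_, ?_⟩
    · rw [Finset.mem_sdiff] at hx
      exact Finset.mem_compl.2 hx.2
    · rw [Finset.card_sdiff_of_subset hS.2, hS.1]
  · intro T hT
    rw [Finset.mem_powersetCard] at hT
    have hdisj : Disjoint T R := by
      rw [Finset.disjoint_left]
      exact fun x hx => Finset.mem_compl.1 (hT.1 hx)
    rw [Finset.mem_filter, Finset.mem_powersetCard_univ]
    refine ⟨?_, Finset.subset_union_right⟩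
    rw [Finset.card_union_of_disjoint hdisj, hT.2]
    omega
  · intro S hS
    rw [Finset.mem_filter] at hS
    exact Finset.sdiff_union_of_subset hS.2
  · intro T hT
    rw [Finset.mem_powersetCard] at hT
    have hdisj : Disjoint T R := by
      rw [Finset.disjoint_left]
      exact fun x hx => Finset.mem_compl.1 (hT.1 hx)
    show (T ∪ R) \ R = T
    rw [Finset.union_sdiff_cancel_right hdisj]

lemma sum_powersetCard_det_gramS {k : ℕ} (Y : Matrix (Fin n) κ ℝ)
    (hk : Fintype.card κ ≤ k) (hkn : k ≤ n) :
    ∑ S ∈ powersetCard k (univ : Finset (Fin n)), (gramS Y S).det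
      = ((n - Fintype.card κ).choose (k - Fintype.card κ) : ℝ) * (gramS Y univ).det := by
  classical
  set j := Fintype.card κ with hj
  set c : (κ → Fin n) → ℝ := fun f => (∏ p, Y (f p) p) * (Y.submatrix f id).det with hc
  have step1 : ∀ S : Finset (Fin n), (gramS Y S).det
      = ∑ f : κ → Fin n, if (∀ p, f p ∈ S) then c f else 0 := by
    intro S
    rw [det_gramS, ← Finset.sum_filter]
    refine Finset.sum_congr ?_ fun _ _ => rfl
    ext f
    simp [Fintype.mem_piFinset]
  calc ∑ S ∈ powersetCard k (univ : Finset (Fin n)), (gramS Y S).det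
      = ∑ S ∈ powersetCard k (univ : Finset (Fin n)), ∑ f : κ → Fin n,
          if (∀ p, f p ∈ S) then c f else 0 := Finset.sum_congr rfl fun S _ => step1 S
    _ = ∑ f : κ → Fin n, ∑ S ∈ powersetCard k (univ : Finset (Fin n)),
          if (∀ p, f p ∈ S) then c f else 0 := Finset.sum_comm
    _ = ∑ f : κ → Fin n, (((n - j).choose (k - j) : ℝ)) * c f := by
        refine Finset.sum_congr rfl fun f _ => ?_
        rw [← Finset.sum_filter, Finset.sum_const, nsmul_eq_mul]
        by_cases hf : Function.Injective f
        · congr 2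
          have himg : ((powersetCard k (univ : Finset (Fin n))).filter (fun S => ∀ p, f p ∈ S))
              = ((powersetCard k (univ : Finset (Fin n))).filter
                  (fun S => (Finset.image f univ) ⊆ S)) := by
            refine Finset.filter_congr fun S _ => ?_
            simp [Finset.image_subset_iff]
          have hcard : #(Finset.image f univ) = j := by
            rw [Finset.card_image_of_injective _ hf, Finset.card_univ]
          have hjk : #(Finset.image f univ) ≤ k := by rw [hcard]; omega
          rw [himg, card_filter_supersets _ hjk hkn, hcard]
        · have : c f = 0 := by
            rw [hc]
            simp [det_submatrix_zero_of_not_injective Y hf]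
          rw [this]; simp
    _ = ((n - j).choose (k - j) : ℝ) * (gramS Y univ).det := by
        rw [← Finset.mul_sum, det_gramS, Fintype.piFinset_univ]

end GramSec

theorem sum_det_mul_esymm_inv_le {n m : ℕ} (X : Matrix (Fin n) (Fin m) ℝ)
    (hX : X.rank = m) (k : ℕ) (hmk : m ≤ k) (hkn : k ≤ n)
    (ℓ : ℕ) (h1 : 1 ≤ ℓ) (h2 : ℓ ≤ m) :
    (∑ S ∈ Finset.powersetCard k (Finset.univ : Finset (Fin n)),
        Esymm (m - ℓ) ((rowSub X S)ᵀ * rowSub X S) ≤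
      ((n - m + ℓ).choose (k - m + ℓ) : ℝ) * Esymm (m - ℓ) (Xᵀ * X)) ∧
    ((∀ S ∈ Finset.powersetCard k (Finset.univ : Finset (Fin n)),
        ((rowSub X S)ᵀ * rowSub X S).PosDef) →
      ∑ S ∈ Finset.powersetCard k (Finset.univ : Finset (Fin n)),
          Esymm (m - ℓ) ((rowSub X S)ᵀ * rowSub X S) =
        ((n - m + ℓ).choose (k - m + ℓ) : ℝ) * Esymm (m - ℓ) (Xᵀ * X)) := by
  classical
  have hmn : m ≤ n := le_trans hmk hkn
  have hH : ∀ S : Finset (Fin n), ((rowSub X S)ᵀ * rowSub X S).IsHermitian := fun S => by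
    rw [← Matrix.conjTranspose_eq_transpose_of_trivial]
    exact Matrix.isHermitian_conjTranspose_mul_self _
  have hHX : (Xᵀ * X).IsHermitian := by
    rw [← Matrix.conjTranspose_eq_transpose_of_trivial]
    exact Matrix.isHermitian_conjTranspose_mul_self _
  have bridgeS : ∀ (S : Finset (Fin n)) (T : Finset (Fin m)),
      ((rowSub X S)ᵀ * rowSub X S).submatrix (Subtype.val : {i // i ∈ T} → Fin m) Subtype.val
        = gramS (X.submatrix id (Subtype.val : {q // q ∈ T} → Fin m)) S := by
    intro S T
    ext p q
    simp only [Matrix.submatrix_apply, Matrix.mul_apply, Matrix.transpose_apply, rowSub,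
      gramS, Matrix.of_apply, id_eq]
    exact Finset.sum_coe_sort S (fun i => X i p.1 * X i q.1)
  have bridgeU : ∀ T : Finset (Fin m),
      (Xᵀ * X).submatrix (Subtype.val : {i // i ∈ T} → Fin m) Subtype.val
        = gramS (X.submatrix id (Subtype.val : {q // q ∈ T} → Fin m)) univ := by
    intro T
    ext p q
    simp [Matrix.mul_apply, gramS]
  have key : ∑ S ∈ Finset.powersetCard k (Finset.univ : Finset (Fin n)),
      Esymm (m - ℓ) ((rowSub X S)ᵀ * rowSub X S)
      = ((n - m + ℓ).choose (k - m + ℓ) : ℝ) * Esymm (m - ℓ) (Xᵀ * X) := by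
    calc ∑ S ∈ Finset.powersetCard k (Finset.univ : Finset (Fin n)),
          Esymm (m - ℓ) ((rowSub X S)ᵀ * rowSub X S)
        = ∑ S ∈ Finset.powersetCard k (Finset.univ : Finset (Fin n)),
            ∑ T ∈ powersetCard (m - ℓ) (univ : Finset (Fin m)),
              (gramS (X.submatrix id (Subtype.val : {q // q ∈ T} → Fin m)) S).det := by
          refine Finset.sum_congr rfl fun S _ => ?_
          rw [Esymm_eq_sum_minors _ (hH S) (Nat.sub_le m ℓ)]
          exact Finset.sum_congr rfl fun T _ => by rw [bridgeS S T]
      _ = ∑ T ∈ powersetCard (m - ℓ) (univ : Finset (Fin m)),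
            ∑ S ∈ Finset.powersetCard k (Finset.univ : Finset (Fin n)),
              (gramS (X.submatrix id (Subtype.val : {q // q ∈ T} → Fin m)) S).det :=
          Finset.sum_comm
      _ = ∑ T ∈ powersetCard (m - ℓ) (univ : Finset (Fin m)),
            ((n - m + ℓ).choose (k - m + ℓ) : ℝ) *
              (gramS (X.submatrix id (Subtype.val : {q // q ∈ T} → Fin m)) univ).det := by
          refine Finset.sum_congr rfl fun T hT => ?_
          rw [Finset.mem_powersetCard_univ] at hT
          have hcard : Fintype.card {q // q ∈ T} = m - ℓ := by rw [Fintype.card_coe, hT]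
          rw [sum_powersetCard_det_gramS _ (by rw [hcard]; omega) hkn, hcard,
            show n - (m - ℓ) = n - m + ℓ from by omega,
            show k - (m - ℓ) = k - m + ℓ from by omega]
      _ = ((n - m + ℓ).choose (k - m + ℓ) : ℝ) * Esymm (m - ℓ) (Xᵀ * X) := by
          rw [← Finset.mul_sum, Esymm_eq_sum_minors _ hHX (Nat.sub_le m ℓ)]
          congr 1
  exact ⟨le_of_eq key, fun _ => key⟩
end

section
/- If z, z' ∈ ℝⁿ satisfy 0 ≤ z ≤ z' componentwise and Xᵀ Diag(z) X is positive definite, then E_ℓ((Xᵀ Diag(z') X)⁻¹) ≤ E_ℓ((Xᵀ Diag(z) X)⁻¹) for each 1 ≤ ℓ ≤ m. -/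
open Matrix Finset

lemma eig_ge_one {k : Type*} [Fintype k] [DecidableEq k] {Q : Matrix k k ℝ} (hQ : Q.IsHermitian)
    (h : (Q - 1).PosSemidef) (i : k) : 1 ≤ hQ.eigenvalues i := by
  classical
  set v : k → ℝ := ⇑(hQ.eigenvectorBasis i) with hv
  have hvv : dotProduct (star v) v = 1 := by
    have h1 : (inner ℝ (hQ.eigenvectorBasis i) (hQ.eigenvectorBasis i) : ℝ) = 1 := by
      have := hQ.eigenvectorBasis.orthonormal.1 i
      rw [@inner_self_eq_norm_sq_to_K ℝ, this]; norm_num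
    rw [EuclideanSpace.inner_eq_star_dotProduct, dotProduct_comm] at h1
    exact h1
  have heig : hQ.eigenvalues i = dotProduct (star v) (Q *ᵥ v) := by
    simpa using hQ.eigenvalues_eq i
  have h2 := h.dotProduct_mulVec_nonneg v
  rw [Matrix.sub_mulVec, dotProduct_sub, Matrix.one_mulVec, hvv, ← heig] at h2
  linarith

lemma one_le_det {k : Type*} [Fintype k] [DecidableEq k] {Q : Matrix k k ℝ} (hQ : Q.IsHermitian)
    (h : (Q - 1).PosSemidef) : 1 ≤ Q.det := by
  have hdet : Q.det = ∏ i, (hQ.eigenvalues i : ℝ) := by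
    simpa using hQ.det_eq_prod_eigenvalues
  rw [hdet]
  calc (1:ℝ) = ∏ _i : k, 1 := by simp
    _ ≤ ∏ i, hQ.eigenvalues i :=
      Finset.prod_le_prod (fun i _ => zero_le_one) (fun i _ => eig_ge_one hQ h i)

lemma det_mono {k : Type*} [Fintype k] [DecidableEq k] {M N : Matrix k k ℝ} (hM : M.PosDef)
    (hN : N.IsHermitian) (h : (N - M).PosSemidef) : M.det ≤ N.det := by
  classical
  obtain ⟨S, hSh, hS2⟩ : ∃ S : Matrix k k ℝ, S.IsHermitian ∧ S * S = M := by
    open MatrixOrder in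
    exact ⟨CFC.sqrt M, (CFC.sqrt_nonneg M).posSemidef.isHermitian,
      CFC.sqrt_mul_sqrt_self M hM.posSemidef.nonneg⟩
  have hdetS : S.det ≠ 0 := by
    have h' : S.det * S.det = M.det := by rw [← det_mul, hS2]
    intro h0; rw [h0, mul_zero] at h'; exact (ne_of_gt hM.det_pos) h'.symm
  have hSinv : S * S⁻¹ = 1 := mul_nonsing_inv _ (isUnit_iff_ne_zero.2 hdetS)
  have hSinv' : S⁻¹ * S = 1 := nonsing_inv_mul _ (isUnit_iff_ne_zero.2 hdetS)
  have hSinvh : (S⁻¹)ᴴ = S⁻¹ := by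
    rw [conjTranspose_nonsing_inv, hSh.eq]
  have hQh : (S⁻¹ * N * S⁻¹).IsHermitian := by
    have := isHermitian_mul_mul_conjTranspose (S⁻¹)ᴴ hN
    rwa [conjTranspose_conjTranspose, hSinvh] at this
  have hQ1 : S⁻¹ * N * S⁻¹ - 1 = S⁻¹ * (N - M) * S⁻¹ := by
    rw [Matrix.mul_sub, Matrix.sub_mul]
    congr 1
    rw [← hS2, ← Matrix.mul_assoc, hSinv', Matrix.one_mul, hSinv]
  have hQ1psd : (S⁻¹ * N * S⁻¹ - 1).PosSemidef := by
    rw [hQ1]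
    have h2 := h.conjTranspose_mul_mul_same (B := S⁻¹)
    rwa [hSinvh] at h2
  have h1 : (1:ℝ) ≤ (S⁻¹ * N * S⁻¹).det := one_le_det hQh hQ1psd
  have hQdet : (S⁻¹ * N * S⁻¹).det = N.det / M.det := by
    rw [det_mul, det_mul, det_nonsing_inv, ← hS2, det_mul]
    rw [Ring.inverse_eq_inv']
    field_simp
  rw [hQdet] at h1
  have hMdet := hM.det_pos
  calc M.det = 1 * M.det := (one_mul _).symm
    _ ≤ (N.det / M.det) * M.det := mul_le_mul_of_nonneg_right h1 (le_of_lt hMdet)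
    _ = N.det := by field_simp


lemma inv_antitone {m : ℕ} {A B : Matrix (Fin m) (Fin m) ℝ} (hA : A.PosDef)
    (hB : B.PosDef) (h : (B - A).PosSemidef) : (A⁻¹ - B⁻¹).PosSemidef := by
  classical
  have hAu : IsUnit A.det := isUnit_iff_ne_zero.2 (ne_of_gt hA.det_pos)
  have hBu : IsUnit B.det := isUnit_iff_ne_zero.2 (ne_of_gt hB.det_pos)
  have hBinvh : (B⁻¹)ᴴ = B⁻¹ := by
    rw [conjTranspose_nonsing_inv, hB.isHermitian.eq]
  have hΔh : (B - A)ᴴ = B - A := h.isHermitian.eq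
  -- first term
  have t1 : ((B⁻¹) * (B - A) * (B⁻¹)).PosSemidef := by
    have := h.conjTranspose_mul_mul_same (B := B⁻¹)
    rwa [hBinvh] at this
  -- second term
  have t2 : ((B⁻¹ * (B - A)) * A⁻¹ * ((B - A) * B⁻¹)).PosSemidef := by
    have := hA.inv.posSemidef.conjTranspose_mul_mul_same (B := (B - A) * B⁻¹)
    rwa [conjTranspose_mul, hBinvh, hΔh] at this
  have key : A⁻¹ - B⁻¹ =
      (B⁻¹) * (B - A) * (B⁻¹) + (B⁻¹ * (B - A)) * A⁻¹ * ((B - A) * B⁻¹) := by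
    have e1 : A⁻¹ * ((B - A) * B⁻¹) = A⁻¹ - B⁻¹ := by
      rw [Matrix.sub_mul, Matrix.mul_sub, ← Matrix.mul_assoc,
        nonsing_inv_mul_cancel_left _ _ hAu]
      rw [Matrix.mul_assoc, mul_nonsing_inv _ hBu, Matrix.mul_one]
    have e2 : B⁻¹ * (B - A) * A⁻¹ = A⁻¹ - B⁻¹ := by
      rw [Matrix.mul_sub, Matrix.sub_mul, nonsing_inv_mul _ hBu, Matrix.one_mul,
        Matrix.mul_assoc, mul_nonsing_inv _ hAu, Matrix.mul_one]
    calc A⁻¹ - B⁻¹ = B⁻¹ * (B - A) * A⁻¹ := e2.symm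
      _ = B⁻¹ * (B - A) * (B⁻¹ + (A⁻¹ - B⁻¹)) := by rw [add_sub_cancel]
      _ = B⁻¹ * (B - A) * B⁻¹ + B⁻¹ * (B - A) * (A⁻¹ - B⁻¹) := by
          rw [Matrix.mul_add]
      _ = B⁻¹ * (B - A) * B⁻¹ + (B⁻¹ * (B - A)) * A⁻¹ * ((B - A) * B⁻¹) := by
          rw [Matrix.mul_assoc (B⁻¹ * (B - A)) A⁻¹, e1]
  rw [key]
  exact t1.add t2


lemma det_piecewise {m : ℕ} (M : Matrix (Fin m) (Fin m) ℝ) (S : Finset (Fin m)) :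
    (Matrix.of fun i j => if i ∈ S then M i j else (1 : Matrix (Fin m) (Fin m) ℝ) i j).det
      = (M.submatrix (fun a : {x // x ∈ S} => (a : Fin m)) (fun a : {x // x ∈ S} => (a : Fin m))).det := by
  classical
  rw [← Matrix.det_submatrix_equiv_self (Equiv.sumCompl (· ∈ S))]
  have h : (Matrix.of fun i j => if i ∈ S then M i j else (1 : Matrix (Fin m) (Fin m) ℝ) i j).submatrix
        (Equiv.sumCompl (· ∈ S)) (Equiv.sumCompl (· ∈ S))
      = Matrix.fromBlocks
          (M.submatrix (fun a : {x // x ∈ S} => (a : Fin m)) (fun a : {x // x ∈ S} => (a : Fin m)))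
          (M.submatrix (fun a : {x // x ∈ S} => (a : Fin m)) (fun a : {x // ¬ x ∈ S} => (a : Fin m)))
          0 1 := by
    ext i j
    cases i with
    | inl i =>
      cases j with
      | inl j => simp [i.2]
      | inr j => simp [i.2]
    | inr i =>
      cases j with
      | inl j =>
        have hij : (i : Fin m) ≠ (j : Fin m) := by
          intro hij
          exact i.2 (hij ▸ j.2)
        simp [i.2, Matrix.one_apply, hij]
      | inr j =>
        by_cases hij : (i : Fin m) = (j : Fin m)
        · have h2 : i = j := Subtype.ext hij
          simp [h2, j.2, Matrix.one_apply]
        · have h2 : i ≠ j := fun h => hij (congrArg _ h)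
          simp [i.2, Matrix.one_apply, hij, h2]
  rw [h, Matrix.det_fromBlocks_zero₂₁, Matrix.det_one, mul_one]

lemma det_one_add_smul_eq_sum {m : ℕ} (M : Matrix (Fin m) (Fin m) ℝ) (t : ℝ) :
    (1 + t • M).det = ∑ S : Finset (Fin m), t ^ S.card *
      (M.submatrix (fun a : {x // x ∈ S} => (a : Fin m)) (fun a : {x // x ∈ S} => (a : Fin m))).det := by
  classical
  set f := (Matrix.detRowAlternating (R := ℝ) (n := Fin m)).toMultilinearMap with hf
  have h0 : (1 + t • M).det
      = f ((fun i => (t • M) i) + (fun i => (1 : Matrix (Fin m) (Fin m) ℝ) i)) := by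
    show Matrix.detRowAlternating _ = Matrix.detRowAlternating _
    congr 1
    ext i j
    simp [Matrix.add_apply, add_comm]
  rw [h0, MultilinearMap.map_add_univ]
  apply Finset.sum_congr rfl
  intro S _
  have h1 : (S.piecewise (fun i => (t • M) i) (fun i => (1 : Matrix (Fin m) (Fin m) ℝ) i))
      = S.piecewise (fun i => t • (S.piecewise (fun i => M i) (fun i => (1 : Matrix (Fin m) (Fin m) ℝ) i)) i)
        (S.piecewise (fun i => M i) (fun i => (1 : Matrix (Fin m) (Fin m) ℝ) i)) := by
    ext i j
    by_cases hi : i ∈ S <;> simp [Finset.piecewise, hi]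
  rw [h1, MultilinearMap.map_piecewise_smul]
  have h2 : f (S.piecewise (fun i => M i) (fun i => (1 : Matrix (Fin m) (Fin m) ℝ) i))
      = (M.submatrix (fun a : {x // x ∈ S} => (a : Fin m)) (fun a : {x // x ∈ S} => (a : Fin m))).det := by
    rw [← det_piecewise M S]
    show Matrix.detRowAlternating _ = Matrix.detRowAlternating _
    congr 1
    ext i j
    by_cases hi : i ∈ S <;> simp [Finset.piecewise, hi]
  rw [h2]
  simp [Finset.prod_const, smul_eq_mul]


lemma det_one_add_smul_eq_prod {m : ℕ} {M : Matrix (Fin m) (Fin m) ℝ} (hM : M.IsHermitian)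
    (t : ℝ) : (1 + t • M).det = ∏ i, (1 + t * hM.eigenvalues i) := by
  classical
  set U : Matrix (Fin m) (Fin m) ℝ := (hM.eigenvectorUnitary : Matrix (Fin m) (Fin m) ℝ) with hU
  have hUU : U * star U = 1 := (Matrix.mem_unitaryGroup_iff).mp hM.eigenvectorUnitary.2
  have hUU' : star U * U = 1 := (Matrix.mem_unitaryGroup_iff').mp hM.eigenvectorUnitary.2
  have hspec : M = U * Matrix.diagonal hM.eigenvalues * star U := by
    have := hM.spectral_theorem
    simpa using this
  have key : 1 + t • M = U * (Matrix.diagonal (fun i => 1 + t * hM.eigenvalues i)) * star U := by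
    have hd : Matrix.diagonal (fun i => 1 + t * hM.eigenvalues i)
        = 1 + t • Matrix.diagonal hM.eigenvalues := by
      ext i j
      by_cases hij : i = j
      · subst hij; simp [Matrix.one_apply]
      · simp [Matrix.diagonal_apply_ne _ hij, Matrix.one_apply, hij]
    rw [hd, Matrix.mul_add, Matrix.add_mul, Matrix.mul_one, hUU,
      Matrix.mul_smul, Matrix.smul_mul, ← hspec]
  rw [key, Matrix.det_mul, Matrix.det_mul, mul_comm, ← mul_assoc, ← Matrix.det_mul, hUU',
    Matrix.det_one, one_mul, Matrix.det_diagonal]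

lemma coeff_ext {m : ℕ} (a b : Finset (Fin m) → ℝ)
    (h : ∀ t : ℝ, ∑ S : Finset (Fin m), t ^ S.card * a S
        = ∑ S : Finset (Fin m), t ^ S.card * b S) (ℓ : ℕ) :
    ∑ S ∈ Finset.powersetCard ℓ (Finset.univ : Finset (Fin m)), a S
      = ∑ S ∈ Finset.powersetCard ℓ (Finset.univ : Finset (Fin m)), b S := by
  classical
  have hP : (∑ S : Finset (Fin m), Polynomial.C (a S) * Polynomial.X ^ S.card)
      = ∑ S : Finset (Fin m), Polynomial.C (b S) * Polynomial.X ^ S.card := by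
    apply Polynomial.funext
    intro t
    rw [Polynomial.eval_finset_sum, Polynomial.eval_finset_sum]
    simp only [Polynomial.eval_mul, Polynomial.eval_C, Polynomial.eval_pow, Polynomial.eval_X]
    simpa [mul_comm] using h t
  have hc := congrArg (fun p => Polynomial.coeff p ℓ) hP
  simp only [Polynomial.finset_sum_coeff, Polynomial.coeff_C_mul,
    Polynomial.coeff_X_pow] at hc
  rw [Finset.powersetCard_eq_filter]
  rw [show (Finset.univ : Finset (Fin m)).powerset.filter (fun t => t.card = ℓ)
      = (Finset.univ : Finset (Finset (Fin m))).filter (fun t => t.card = ℓ) by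
    rw [Finset.powerset_univ]]
  rw [Finset.sum_filter, Finset.sum_filter]
  have hswap : ∀ (c : Finset (Fin m) → ℝ),
      (∑ x : Finset (Fin m), c x * if ℓ = x.card then 1 else 0)
        = ∑ x : Finset (Fin m), if x.card = ℓ then c x else 0 := by
    intro c
    apply Finset.sum_congr rfl
    intro x _
    by_cases hx : x.card = ℓ
    · simp [hx]
    · rw [if_neg (fun h => hx h.symm), if_neg hx, mul_zero]
  rw [hswap, hswap] at hc
  exact hc

lemma sum_minors_eq_esymm {m : ℕ} {M : Matrix (Fin m) (Fin m) ℝ} (hM : M.IsHermitian) (ℓ : ℕ) :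
    ∑ S ∈ Finset.powersetCard ℓ (Finset.univ : Finset (Fin m)),
        (M.submatrix (fun a : {x // x ∈ S} => (a : Fin m)) (fun a : {x // x ∈ S} => (a : Fin m))).det
      = ∑ S ∈ Finset.powersetCard ℓ (Finset.univ : Finset (Fin m)), ∏ i ∈ S, hM.eigenvalues i := by
  classical
  apply coeff_ext
  intro t
  rw [← det_one_add_smul_eq_sum, det_one_add_smul_eq_prod hM]
  have h1 : ∀ i : Fin m, 1 + t * hM.eigenvalues i = t * hM.eigenvalues i + 1 := fun i => add_comm _ _
  simp_rw [h1]
  rw [Finset.prod_add]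
  rw [show (Finset.univ : Finset (Fin m)).powerset = (Finset.univ : Finset (Finset (Fin m))) from
    Finset.powerset_univ]
  apply Finset.sum_congr rfl
  intro S _
  rw [Finset.prod_const_one, mul_one, Finset.prod_mul_distrib, Finset.prod_const]

lemma posdef_submatrix {m : ℕ} {M : Matrix (Fin m) (Fin m) ℝ} (hM : M.PosDef)
    (S : Finset (Fin m)) :
    (M.submatrix (fun a : {x // x ∈ S} => (a : Fin m)) (fun a : {x // x ∈ S} => (a : Fin m))).PosDef := by
  classical
  rw [posDef_iff_dotProduct_mulVec]
  constructor
  · ext i j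
    simp only [conjTranspose_apply, submatrix_apply]
    exact hM.isHermitian.apply _ _
  · intro x hx
    set y : Fin m → ℝ := fun j => if h : j ∈ S then x ⟨j, h⟩ else 0 with hy
    have hyne : y ≠ 0 := by
      intro h0
      apply hx
      funext i
      have := congrFun h0 (i : Fin m)
      simpa [hy, i.2] using this
    have hkey : dotProduct (star x)
          ((M.submatrix (fun a : {x // x ∈ S} => (a : Fin m)) (fun a : {x // x ∈ S} => (a : Fin m))) *ᵥ x)
        = dotProduct (star y) (M *ᵥ y) := by
      simp only [dotProduct, mulVec, dotProduct, star_trivial, submatrix_apply]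
      have e1 : ∀ i : {x // x ∈ S}, x i = y (i : Fin m) := fun i => by simp [hy, i.2]
      have e2 : ∀ i : Fin m, (∑ j : {x // x ∈ S}, M i (j : Fin m) * y (j : Fin m))
          = ∑ j, M i j * y j := by
        intro i
        rw [Finset.sum_coe_sort S (fun j => M i j * y j)]
        exact Finset.sum_subset (Finset.subset_univ S) (fun j _ hj => by simp [hy, hj])
      simp_rw [e1, e2]
      rw [Finset.sum_coe_sort S (fun i => y i * ∑ j, M i j * y j)]
      exact Finset.sum_subset (Finset.subset_univ S) (fun j _ hj => by simp [hy, hj])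
    rw [hkey]
    exact hM.dotProduct_mulVec_pos hyne


lemma psd_weight {n m : ℕ} (X : Matrix (Fin n) (Fin m) ℝ) {d : Fin n → ℝ}
    (hd : ∀ i, 0 ≤ d i) : (Xᵀ * Matrix.diagonal d * X).PosSemidef := by
  classical
  have hdd : Matrix.diagonal d = (Matrix.diagonal fun i => Real.sqrt (d i))
      * (Matrix.diagonal fun i => Real.sqrt (d i)) := by
    rw [Matrix.diagonal_mul_diagonal]
    exact congrArg Matrix.diagonal (funext fun i => (Real.mul_self_sqrt (hd i)).symm)
  have key : Xᵀ * Matrix.diagonal d * X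
      = ((Matrix.diagonal fun i => Real.sqrt (d i)) * X)ᴴ
        * ((Matrix.diagonal fun i => Real.sqrt (d i)) * X) := by
    rw [conjTranspose_mul, conjTranspose_eq_transpose_of_trivial,
      conjTranspose_eq_transpose_of_trivial, Matrix.diagonal_transpose, hdd]
    rw [Matrix.mul_assoc, Matrix.mul_assoc, Matrix.mul_assoc]
  rw [key]
  exact posSemidef_conjTranspose_mul_self _

theorem esymm_inv_antitone_in_weights {n m : ℕ} (X : Matrix (Fin n) (Fin m) ℝ)
    (z z' : Fin n → ℝ) (hz : ∀ i, 0 ≤ z i) (hzz' : ∀ i, z i ≤ z' i)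
    (hpd : (Xᵀ * Matrix.diagonal z * X).PosDef)
    (ℓ : ℕ) (h1 : 1 ≤ ℓ) (h2 : ℓ ≤ m) :
    Esymm ℓ (Xᵀ * Matrix.diagonal z' * X)⁻¹ ≤ Esymm ℓ (Xᵀ * Matrix.diagonal z * X)⁻¹ := by
  classical
  set A := Xᵀ * Matrix.diagonal z * X with hA
  set B := Xᵀ * Matrix.diagonal z' * X with hB
  have hDpsd : (Xᵀ * Matrix.diagonal (fun i => z' i - z i) * X).PosSemidef :=
    psd_weight X (fun i => sub_nonneg.2 (hzz' i))
  have hBA : B - A = Xᵀ * Matrix.diagonal (fun i => z' i - z i) * X := by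
    rw [hA, hB, show Matrix.diagonal (fun i => z' i - z i)
        = Matrix.diagonal z' - Matrix.diagonal z by
      rw [Matrix.diagonal_sub]]
    rw [Matrix.mul_sub, Matrix.sub_mul]
  have hΔ : (B - A).PosSemidef := by rw [hBA]; exact hDpsd
  have hBpd : B.PosDef := by
    have := hpd.add_posSemidef hΔ
    rwa [add_sub_cancel] at this
  have hInv : (A⁻¹ - B⁻¹).PosSemidef := inv_antitone hpd hBpd hΔ
  have hAinv := hpd.inv
  have hBinv := hBpd.inv
  have hAh : (A⁻¹).IsHermitian := hAinv.isHermitian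
  have hBh : (B⁻¹).IsHermitian := hBinv.isHermitian
  rw [Esymm, Esymm, dif_pos hAh, dif_pos hBh]
  rw [← sum_minors_eq_esymm hAh ℓ, ← sum_minors_eq_esymm hBh ℓ]
  apply Finset.sum_le_sum
  intro S _
  apply det_mono (posdef_submatrix hBinv S) (posdef_submatrix hAinv S).isHermitian
  have hsub : (A⁻¹).submatrix (fun a : {x // x ∈ S} => (a : Fin m)) (fun a : {x // x ∈ S} => (a : Fin m))
      - (B⁻¹).submatrix (fun a : {x // x ∈ S} => (a : Fin m)) (fun a : {x // x ∈ S} => (a : Fin m))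
      = (A⁻¹ - B⁻¹).submatrix (fun a : {x // x ∈ S} => (a : Fin m)) (fun a : {x // x ∈ S} => (a : Fin m)) := by
    ext i j
    simp [Matrix.sub_apply]
  rw [hsub]
  exact hInv.submatrix _
end
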